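/- arXiv:1604.07188 — 7 statements merged into one kernel-verified Lean document; each statement's English description precedes it below -/
import Mathlib

section
/- Let 0 < α < 1, X > 0, and let y be three times continuously differentiable on [0, X]. Fix x ∈ (0, X]. Then there is a constant C > 0 such that for every positive integer n, with h = x/n, |(1/(Γ(1−α) h^α)) ∑_{k=0}^{n} ω_k y(x − kh) − D^α y(x)| ≤ C h^{1−α}. -/
open Finset

/-- Real values of the Riemann zeta function (real part of the analytic continuation). -/
noncomputable def zetaR (s : ℝ) : ℝ := (riemannZeta (s : ℂ)).re

/-- Caputo derivative of order `α` (for `0 < α < 1`). -/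
noncomputable def caputo (α : ℝ) (y : ℝ → ℝ) (x : ℝ) : ℝ :=
  (1 / Real.Gamma (1 - α)) * ∫ t in (0:ℝ)..x, deriv y t * (x - t) ^ (-α)

/-- Weights `ω_k` of the midpoint-based approximation. -/
noncomputable def wgt (α : ℝ) (n k : ℕ) : ℝ :=
  if k = 0 then (2:ℝ) ^ α
  else if k = n then -((2:ℝ) ^ α) * (2 * (n:ℝ) - 1) ^ (-α)
  else (2:ℝ) ^ α * ((2 * (k:ℝ) + 1) ^ (-α) - (2 * (k:ℝ) - 1) ^ (-α))

/-- Weights `σ̄_k` of the order `2 - α` approximation (before endpoint correction). -/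
noncomputable def sigmab (α : ℝ) (n k : ℕ) : ℝ :=
  if k = 0 then wgt α n 0 - ((2:ℝ) ^ α - 1) * zetaR α
  else if k = 1 then wgt α n 1 + ((2:ℝ) ^ α - 1) * zetaR α
  else wgt α n k

/-- The quantity `W_n`. -/
noncomputable def Wn (α : ℝ) (n : ℕ) : ℝ :=
  zetaR α - (n:ℝ) ^ (1 - α) / (1 - α) +
    (2:ℝ) ^ α * ((∑ k ∈ Finset.Icc 1 n, (2 * (k:ℝ) - 1) ^ (-α)) - zetaR α)

/-- Weights `σ_k` of the order `2 - α` approximation. -/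
noncomputable def sigmaw (α : ℝ) (n k : ℕ) : ℝ :=
  if k = n - 1 then sigmab α n k - Wn α n
  else if k = n then sigmab α n k + Wn α n
  else sigmab α n k

/-- Weights `δ̄_k` of the second-order approximation (before endpoint correction). -/
noncomputable def deltab (α : ℝ) (n k : ℕ) : ℝ :=
  if k = 0 then wgt α n 0 + (3/2) * (1 - (2:ℝ) ^ α) * zetaR α + ((2:ℝ) ^ (α - 1) - 1) * zetaR (α - 1)
  else if k = 1 then wgt α n 1 - 2 * (1 - (2:ℝ) ^ α) * zetaR α - 2 * ((2:ℝ) ^ (α - 1) - 1) * zetaR (α - 1)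
  else if k = 2 then wgt α n 2 + (1/2) * (1 - (2:ℝ) ^ α) * zetaR α + ((2:ℝ) ^ (α - 1) - 1) * zetaR (α - 1)
  else wgt α n k

/-- Weights `δ_k` of the second-order approximation. -/
noncomputable def deltaw (α : ℝ) (n k : ℕ) : ℝ :=
  if k = n - 1 then deltab α n k - Wn α n
  else if k = n then deltab α n k + Wn α n
  else deltab α n k

open MeasureTheory intervalIntegral

set_option maxHeartbeats 1000000

lemma abel_wgt (α : ℝ) {n : ℕ} (hn : 0 < n) (f : ℕ → ℝ) :
    ∑ k ∈ Finset.range (n+1), wgt α n k * f k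
      = ∑ k ∈ Finset.range n,
          (2:ℝ)^α * (2*(k:ℝ)+1)^(-α) * (f k - f (k+1)) := by
  set c : ℕ → ℝ := fun k => (2:ℝ)^α * (2*(k:ℝ)+1)^(-α) with hc
  have key : ∀ k ∈ Finset.range (n+1), wgt α n k * f k =
      (if k < n then c k * f k else 0) - (if k = 0 then 0 else c (k-1) * f k) := by
    intro k hk
    rw [Finset.mem_range] at hk
    rcases eq_or_ne k 0 with rfl | hk0
    · simp [wgt, hc, hn, Real.one_rpow]
    · rcases eq_or_ne k n with rfl | hkn
      · have h1 : (((k - 1 : ℕ) : ℝ)) = (k:ℝ) - 1 := by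
          have : 1 ≤ k := Nat.one_le_iff_ne_zero.mpr hk0
          push_cast [Nat.cast_sub this]; ring
        simp only [wgt, if_neg hk0, if_pos rfl, if_neg (lt_irrefl k), hc, h1]
        ring_nf
        simp
      · have hklt : k < n := lt_of_le_of_ne (Nat.lt_succ_iff.mp hk) hkn
        have h1 : (((k - 1 : ℕ) : ℝ)) = (k:ℝ) - 1 := by
          have : 1 ≤ k := Nat.one_le_iff_ne_zero.mpr hk0
          push_cast [Nat.cast_sub this]; ring
        simp only [wgt, if_neg hk0, if_neg hkn, if_pos hklt, hc, h1]
        ring_nf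
  rw [Finset.sum_congr rfl key, Finset.sum_sub_distrib]
  have e1 : ∑ k ∈ Finset.range (n+1), (if k < n then c k * f k else 0)
      = ∑ k ∈ Finset.range n, c k * f k := by
    rw [Finset.sum_range_succ, if_neg (lt_irrefl n), add_zero]
    exact Finset.sum_congr rfl fun k hk => if_pos (Finset.mem_range.mp hk)
  have e2 : ∑ k ∈ Finset.range (n+1), (if k = 0 then 0 else c (k-1) * f k)
      = ∑ k ∈ Finset.range n, c k * f (k+1) := by
    rw [Finset.sum_range_succ']
    simp
  rw [e1, e2, ← Finset.sum_sub_distrib]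
  exact Finset.sum_congr rfl fun k _ => by rw [mul_sub]


theorem stmt1 (α X : ℝ) (hα0 : 0 < α) (hα1 : α < 1) (hX : 0 < X)
    (y : ℝ → ℝ) (hy : ContDiffOn ℝ 3 y (Set.Icc 0 X))
    (x : ℝ) (hx : x ∈ Set.Ioc 0 X) :
    ∃ C > 0, ∀ n : ℕ, 0 < n → ∀ h : ℝ, h = x / n →
      |(1 / (Real.Gamma (1 - α) * h ^ α)) *
          (∑ k ∈ Finset.range (n + 1), wgt α n k * y (x - k * h)) -
        caputo α y x| ≤ C * h ^ (1 - α) := by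
  obtain ⟨hx0, hxX⟩ := hx
  have hΓ : 0 < Real.Gamma (1 - α) := Real.Gamma_pos_of_pos (by linarith)
  have h1α : (0:ℝ) < 1 - α := by linarith
  -- the continuous version of the derivative
  set gt : ℝ → ℝ := derivWithin y (Set.Icc 0 X) with hgt
  have hgtc : ContinuousOn gt (Set.Icc 0 X) :=
    hy.continuousOn_derivWithin (uniqueDiffOn_Icc hX) (by norm_num)
  have hder : ∀ t ∈ Set.Ioo (0:ℝ) X, HasDerivAt y (gt t) t ∧ deriv y t = gt t := by
    intro t ht
    have hmem : Set.Icc (0:ℝ) X ∈ nhds t := Icc_mem_nhds ht.1 ht.2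
    have hdiff : DifferentiableWithinAt ℝ y (Set.Icc 0 X) t :=
      (hy.differentiableOn (by norm_num)) t ⟨ht.1.le, ht.2.le⟩
    have hda : DifferentiableAt ℝ y t := hdiff.differentiableAt hmem
    have heq : gt t = deriv y t := derivWithin_of_mem_nhds hmem
    exact ⟨heq ▸ hda.hasDerivAt, heq.symm⟩
  -- bound on the derivative
  obtain ⟨M, hM0, hM⟩ : ∃ M : ℝ, 0 ≤ M ∧ ∀ t ∈ Set.Icc (0:ℝ) X, |gt t| ≤ M := by
    obtain ⟨C, hC⟩ := isCompact_Icc.exists_bound_of_continuousOn hgtc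
    exact ⟨max C 0, le_max_right _ _, fun t ht =>
      le_trans (by simpa [Real.norm_eq_abs] using hC t ht) (le_max_left _ _)⟩
  -- a.e. equality of deriv y with gt on subintervals of (0, x]
  have hXe : ∀ᵐ t : ℝ, t ≠ X := by
    rw [MeasureTheory.ae_iff]
    convert Real.volume_singleton (a := X) using 2
    ext t; simp
  have hae : ∀ c d : ℝ, 0 ≤ c → d ≤ x →
      (deriv y) =ᵐ[volume.restrict (Set.Ioc c d)] gt := by
    intro c d hc hd
    show ∀ᵐ t ∂(volume.restrict (Set.Ioc c d)), deriv y t = gt t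
    rw [MeasureTheory.ae_restrict_iff' measurableSet_Ioc]
    filter_upwards [hXe] with t htX ht
    have ht' : t ∈ Set.Ioo (0:ℝ) X :=
      ⟨lt_of_le_of_lt hc ht.1, lt_of_le_of_ne (le_trans ht.2 (le_trans hd hxX)) htX⟩
    exact (hder t ht').2
  -- integrability of deriv y on subintervals
  have Ig : ∀ c d : ℝ, 0 ≤ c → c ≤ d → d ≤ x →
      IntervalIntegrable (deriv y) volume c d := by
    intro c d hc hcd hd
    have hsub : Set.uIcc c d ⊆ Set.Icc 0 X := by
      rw [Set.uIcc_of_le hcd]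
      exact Set.Icc_subset_Icc hc (le_trans hd hxX)
    have h1 : IntervalIntegrable gt volume c d :=
      (hgtc.mono hsub).intervalIntegrable
    refine h1.congr_ae ?_
    rw [Set.uIoc_of_le hcd]
    exact (hae c d hc hd).symm
  -- integrability of kernel
  have IK : ∀ c d : ℝ,
      IntervalIntegrable (fun t => (x - t) ^ (-α)) volume c d := by
    intro c d
    have base : IntervalIntegrable (fun s : ℝ => s ^ (-α)) volume (x - c) (x - d) :=
      intervalIntegrable_rpow' (by linarith)
    simpa using base.comp_sub_left x
  -- integrability of the caputo integrand
  have IF : ∀ c d : ℝ, 0 ≤ c → c ≤ d → d ≤ x →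
      IntervalIntegrable (fun t => deriv y t * (x - t) ^ (-α)) volume c d := by
    intro c d hc hcd hd
    have hsub : Set.uIcc c d ⊆ Set.Icc 0 X := by
      rw [Set.uIcc_of_le hcd]
      exact Set.Icc_subset_Icc hc (le_trans hd hxX)
    have h1 : IntervalIntegrable (fun t => (x - t) ^ (-α) * gt t) volume c d :=
      (IK c d).mul_continuousOn (hgtc.mono hsub)
    refine h1.congr_ae ?_
    rw [Set.uIoc_of_le hcd]
    filter_upwards [hae c d hc hd] with t ht
    simp [ht, mul_comm]
  refine ⟨M / Real.Gamma (1-α) * ((2:ℝ)^α + 1/(1-α) + 1) + 1, by positivity, ?_⟩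
  intro n hn h hh
  have hh0 : 0 < h := by rw [hh]; positivity
  have hnh : (n:ℝ) * h = x := by rw [hh]; field_simp
  -- interval endpoints, midpoints
  set a : ℕ → ℝ := fun k => x - ((k:ℝ)+1) * h with ha
  set b : ℕ → ℝ := fun k => x - (k:ℝ) * h with hb
  set m : ℕ → ℝ := fun k => ((k:ℝ) + 1/2) * h with hm
  have hab : ∀ k : ℕ, k < n → 0 ≤ a k ∧ a k < b k ∧ b k ≤ x := by
    intro k hk
    have hk1 : ((k:ℝ)+1) ≤ (n:ℝ) := by exact_mod_cast hk
    have hk0 : (0:ℝ) ≤ (k:ℝ) := Nat.cast_nonneg k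
    refine ⟨?_, ?_, ?_⟩
    · simp only [ha]; nlinarith
    · simp only [ha, hb]; nlinarith
    · simp only [hb]; nlinarith
  -- FTC
  have ftc : ∀ k : ℕ, k < n →
      y (b k) - y (a k) = ∫ t in a k..b k, deriv y t := by
    intro k hk
    obtain ⟨h0a, habk, hbx⟩ := hab k hk
    have hcont : ContinuousOn y (Set.Icc (a k) (b k)) :=
      hy.continuousOn.mono (Set.Icc_subset_Icc h0a (le_trans hbx hxX))
    have hd : ∀ t ∈ Set.Ioo (a k) (b k), HasDerivAt y (deriv y t) t := by
      intro t ht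
      have h2 : t ∈ Set.Ioo (0:ℝ) X :=
        ⟨lt_of_le_of_lt h0a ht.1, lt_of_lt_of_le ht.2 (le_trans hbx hxX)⟩
      obtain ⟨hd', he⟩ := hder t h2
      rw [he]; exact hd'
    exact (integral_eq_sub_of_hasDerivAt_of_le habk.le hcont hd
      (Ig (a k) (b k) h0a habk.le hbx)).symm
  -- splitting of the caputo integral
  have split : (∫ t in (0:ℝ)..x, deriv y t * (x - t) ^ (-α))
      = ∑ k ∈ Finset.range n, ∫ t in a k..b k, deriv y t * (x - t) ^ (-α) := by
    set p : ℕ → ℝ := fun i => (i:ℝ) * h with hp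
    have adj : ∀ i, i < n → IntervalIntegrable
        (fun t => deriv y t * (x - t) ^ (-α)) volume (p i) (p (i+1)) := by
      intro i hi
      have hi1 : ((i:ℝ)+1) ≤ (n:ℝ) := by exact_mod_cast hi
      refine IF (p i) (p (i+1)) (by positivity) ?_ ?_
      · simp only [hp]; push_cast; nlinarith
      · simp only [hp]; push_cast; nlinarith
    have e0 : ∑ i ∈ Finset.range n,
        (∫ t in p i..p (i+1), deriv y t * (x - t) ^ (-α))
        = ∫ t in (0:ℝ)..x, deriv y t * (x - t) ^ (-α) := by
      rw [intervalIntegral.sum_integral_adjacent_intervals adj]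
      simp only [hp]
      norm_num [hnh]
    have e1 : ∀ k ∈ Finset.range n,
        (∫ t in a k..b k, deriv y t * (x - t) ^ (-α))
        = ∫ t in p (n-1-k)..p ((n-1-k)+1), deriv y t * (x - t) ^ (-α) := by
      intro k hk
      rw [Finset.mem_range] at hk
      have hk1 : k + 1 ≤ n := hk
      have c1 : ((n - 1 - k : ℕ) : ℝ) = (n:ℝ) - 1 - (k:ℝ) := by
        rw [Nat.sub_sub]
        have h1k : 1 + k ≤ n := by omega
        rw [Nat.cast_sub h1k]
        push_cast
        ring
      have c2 : (n - 1 - k) + 1 = n - k := by omega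
      have c3 : ((n - k : ℕ) : ℝ) = (n:ℝ) - (k:ℝ) := by
        push_cast [Nat.cast_sub hk.le]; ring
      simp only [hp, c2, c1, c3, ha, hb]
      have ea : x - ((k:ℝ)+1) * h = ((n:ℝ) - 1 - (k:ℝ)) * h := by nlinarith
      have eb : x - (k:ℝ) * h = ((n:ℝ) - (k:ℝ)) * h := by nlinarith
      rw [ea, eb]
    calc (∫ t in (0:ℝ)..x, deriv y t * (x - t) ^ (-α))
        = ∑ i ∈ Finset.range n, ∫ t in p i..p (i+1), deriv y t * (x - t) ^ (-α) := e0.symm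
      _ = ∑ k ∈ Finset.range n,
            ∫ t in p (n-1-k)..p ((n-1-k)+1), deriv y t * (x - t) ^ (-α) :=
          (Finset.sum_range_reflect (fun i => ∫ t in p i..p (i+1),
            deriv y t * (x - t) ^ (-α)) n).symm
      _ = ∑ k ∈ Finset.range n, ∫ t in a k..b k, deriv y t * (x - t) ^ (-α) :=
          (Finset.sum_congr rfl e1).symm
  -- key identity
  have key : (1 / (Real.Gamma (1 - α) * h ^ α)) *
          (∑ k ∈ Finset.range (n + 1), wgt α n k * y (x - k * h)) -
        caputo α y x
      = (1 / Real.Gamma (1-α)) * ∑ k ∈ Finset.range n,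
          ∫ t in a k..b k, deriv y t * ((m k) ^ (-α) - (x - t) ^ (-α)) := by
    have S1 : ∑ k ∈ Finset.range (n+1), wgt α n k * y (x - k * h)
        = ∑ k ∈ Finset.range n, (2:ℝ)^α * (2*(k:ℝ)+1)^(-α) * (y (b k) - y (a k)) := by
      rw [abel_wgt α hn (fun k => y (x - k * h))]
      refine Finset.sum_congr rfl fun k _ => ?_
      simp only [ha, hb]
      push_cast
      ring_nf
    simp only [caputo]
    rw [split, S1, Finset.mul_sum, Finset.mul_sum, Finset.mul_sum, ← Finset.sum_sub_distrib]
    refine Finset.sum_congr rfl fun k hk => ?_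
    rw [Finset.mem_range] at hk
    obtain ⟨h0a, habk, hbx⟩ := hab k hk
    rw [ftc k hk]
    have hmpos : 0 < m k := by simp only [hm]; positivity
    have hmk : (m k) ^ (-α) = (2:ℝ)^α * (2*(k:ℝ)+1)^(-α) * (h ^ α)⁻¹ := by
      have e1 : m k = (2*(k:ℝ)+1) / 2 * h := by simp only [hm]; ring
      rw [e1, Real.mul_rpow (by positivity) hh0.le,
        Real.div_rpow (by positivity) (by norm_num),
        Real.rpow_neg (by positivity : (0:ℝ) ≤ 2*(k:ℝ)+1),
        Real.rpow_neg (by norm_num : (0:ℝ) ≤ 2),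
        Real.rpow_neg hh0.le]
      field_simp
    have e3 : (∫ t in a k..b k, deriv y t * ((m k) ^ (-α) - (x - t) ^ (-α)))
        = (∫ t in a k..b k, deriv y t) * (m k) ^ (-α)
          - ∫ t in a k..b k, deriv y t * (x - t) ^ (-α) := by
      simp only [mul_sub]
      rw [intervalIntegral.integral_sub ((Ig (a k) (b k) h0a habk.le hbx).mul_const _)
        (IF (a k) (b k) h0a habk.le hbx), intervalIntegral.integral_mul_const]
    rw [e3, hmk]
    have hγ : Real.Gamma (1-α) ≠ 0 := ne_of_gt hΓ
    have hhα : h ^ α ≠ 0 := ne_of_gt (Real.rpow_pos_of_pos hh0 α)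
    field_simp
  -- per-interval bounds
  have habs : ∀ k : ℕ, k < n → ∀ᵐ t ∂(volume.restrict (Set.uIoc (a k) (b k))),
      |deriv y t| ≤ M := by
    intro k hk
    obtain ⟨h0a, habk, hbx⟩ := hab k hk
    rw [Set.uIoc_of_le habk.le]
    filter_upwards [hae (a k) (b k) h0a hbx,
      MeasureTheory.ae_restrict_mem measurableSet_Ioc] with t h1 h2
    rw [h1]
    exact hM t ⟨le_trans h0a h2.1.le, le_trans h2.2 (le_trans hbx hxX)⟩
  have hh1 : h * h ^ (-α) = h ^ (1-α) := by
    rw [show (1-α) = 1 + (-α) by ring, Real.rpow_add hh0, Real.rpow_one]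
  have bnd0 : |∫ t in (a 0)..(b 0), deriv y t * ((m 0) ^ (-α) - (x - t) ^ (-α))|
      ≤ M * ((2:ℝ)^α + 1/(1-α)) * h ^ (1-α) := by
    obtain ⟨h0a, habk, hbx⟩ := hab 0 hn
    have hb0 : b 0 = x := by simp [hb]
    have ha0 : a 0 = x - h := by simp [ha]
    have hm0 : m 0 = h / 2 := by simp [hm]; ring
    have hmnn : (0:ℝ) ≤ (m 0) ^ (-α) := Real.rpow_nonneg (by rw [hm0]; positivity) _
    set φ : ℝ → ℝ := fun t => M * ((m 0) ^ (-α) + (x - t) ^ (-α)) with hφ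
    have hφint : IntervalIntegrable φ volume (a 0) (b 0) :=
      (intervalIntegrable_const.add (IK (a 0) (b 0))).const_mul M
    have hbnd : ∀ᵐ t ∂(volume.restrict (Set.uIoc (a 0) (b 0))),
        ‖deriv y t * ((m 0) ^ (-α) - (x - t) ^ (-α))‖ ≤ φ t := by
      filter_upwards [habs 0 hn, MeasureTheory.ae_restrict_mem measurableSet_uIoc]
        with t h1 h2
      rw [Set.uIoc_of_le habk.le] at h2
      have hxt : 0 ≤ x - t := by rw [← hb0]; linarith [h2.2]
      have hKnn : (0:ℝ) ≤ (x - t) ^ (-α) := Real.rpow_nonneg hxt _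
      rw [Real.norm_eq_abs, abs_mul, hφ]
      have h3 : |(m 0) ^ (-α) - (x - t) ^ (-α)| ≤ (m 0) ^ (-α) + (x - t) ^ (-α) :=
        abs_sub_le_iff.mpr ⟨by linarith, by linarith⟩
      exact mul_le_mul h1 h3 (abs_nonneg _) hM0
    have hker : (∫ t in (a 0)..(b 0), (x - t) ^ (-α)) = h ^ (1-α) / (1-α) := by
      rw [intervalIntegral.integral_comp_sub_left (fun s : ℝ => s ^ (-α)) x,
        integral_rpow (Or.inl (by linarith : (-1:ℝ) < -α))]
      rw [hb0, ha0]
      rw [show x - x = (0:ℝ) by ring, show x - (x - h) = h by ring,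
        Real.zero_rpow (by linarith : -α + 1 ≠ 0)]
      rw [show -α + 1 = 1 - α by ring]
      ring
    have hint : (∫ t in (a 0)..(b 0), φ t)
        = M * ((2:ℝ)^α + 1/(1-α)) * h ^ (1-α) := by
      rw [hφ]
      rw [intervalIntegral.integral_const_mul,
        intervalIntegral.integral_add intervalIntegrable_const (IK (a 0) (b 0)),
        intervalIntegral.integral_const, hker]
      have : (b 0 - a 0) = h := by rw [hb0, ha0]; ring
      rw [this, smul_eq_mul, hm0]
      have e : h * (h/2) ^ (-α) = 2 ^ α * h ^ (1-α) := by
        rw [Real.div_rpow hh0.le (by norm_num : (0:ℝ) ≤ 2),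
          Real.rpow_neg (by norm_num : (0:ℝ) ≤ 2), div_eq_mul_inv, inv_inv,
          show h * (h ^ (-α) * 2 ^ α) = (h * h ^ (-α)) * 2 ^ α by ring, hh1]
        ring
      rw [e]
      ring
    calc |∫ t in (a 0)..(b 0), deriv y t * ((m 0) ^ (-α) - (x - t) ^ (-α))|
        ≤ |∫ t in (a 0)..(b 0), φ t| := by
          simpa [Real.norm_eq_abs] using
            intervalIntegral.norm_integral_le_abs_of_norm_le hbnd hφint
      _ = M * ((2:ℝ)^α + 1/(1-α)) * h ^ (1-α) := by
          rw [hint, abs_of_nonneg (by positivity)]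
  have bndk : ∀ k : ℕ, 0 < k → k < n →
      |∫ t in a k..b k, deriv y t * ((m k) ^ (-α) - (x - t) ^ (-α))|
        ≤ M * h ^ (1-α) * ((k:ℝ) ^ (-α) - ((k:ℝ)+1) ^ (-α)) := by
    intro k hk0 hk
    obtain ⟨h0a, habk, hbx⟩ := hab k hk
    have hkr : (0:ℝ) < (k:ℝ) := by exact_mod_cast hk0
    have hkh : (0:ℝ) < (k:ℝ) * h := mul_pos hkr hh0
    have anti : ∀ u v : ℝ, 0 < u → u ≤ v → v ^ (-α) ≤ u ^ (-α) := fun u v hu huv =>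
      Real.rpow_le_rpow_of_nonpos hu huv (by linarith)
    set hi : ℝ := ((k:ℝ) * h) ^ (-α) with hhi
    set lo : ℝ := (((k:ℝ)+1) * h) ^ (-α) with hlo
    have hmk1 : (k:ℝ) * h ≤ m k := by simp only [hm]; nlinarith
    have hmk2 : m k ≤ ((k:ℝ)+1) * h := by simp only [hm]; nlinarith
    have hmpos : 0 < m k := lt_of_lt_of_le hkh hmk1
    have hlohi : lo ≤ hi := anti _ _ hkh (by nlinarith)
    have hbnd : ∀ᵐ t ∂(volume.restrict (Set.uIoc (a k) (b k))),
        ‖deriv y t * ((m k) ^ (-α) - (x - t) ^ (-α))‖ ≤ M * (hi - lo) := by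
      filter_upwards [habs k hk, MeasureTheory.ae_restrict_mem measurableSet_uIoc]
        with t h1 h2
      rw [Set.uIoc_of_le habk.le] at h2
      have hxt1 : (k:ℝ) * h ≤ x - t := by
        have : t ≤ b k := h2.2
        simp only [hb] at this; linarith
      have hxt2 : x - t ≤ ((k:ℝ)+1) * h := by
        have : a k < t := h2.1
        simp only [ha] at this; linarith
      have hxt0 : 0 < x - t := lt_of_lt_of_le hkh hxt1
      have i1 : (m k) ^ (-α) ≤ hi := anti _ _ hkh hmk1
      have i2 : lo ≤ (m k) ^ (-α) := anti _ _ hmpos hmk2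
      have i3 : (x - t) ^ (-α) ≤ hi := anti _ _ hkh hxt1
      have i4 : lo ≤ (x - t) ^ (-α) := anti _ _ hxt0 hxt2
      rw [Real.norm_eq_abs, abs_mul]
      have h3 : |(m k) ^ (-α) - (x - t) ^ (-α)| ≤ hi - lo :=
        abs_sub_le_iff.mpr ⟨by linarith, by linarith⟩
      exact mul_le_mul h1 h3 (abs_nonneg _) hM0
    have hint : (∫ _t in a k..b k, M * (hi - lo)) = h * (M * (hi - lo)) := by
      rw [intervalIntegral.integral_const, smul_eq_mul]
      congr 1
      simp only [ha, hb]; ring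
    calc |∫ t in a k..b k, deriv y t * ((m k) ^ (-α) - (x - t) ^ (-α))|
        ≤ |∫ _t in a k..b k, M * (hi - lo)| := by
          simpa [Real.norm_eq_abs] using
            intervalIntegral.norm_integral_le_abs_of_norm_le hbnd
              (intervalIntegrable_const)
      _ = h * (M * (hi - lo)) := by
          rw [hint, abs_of_nonneg (mul_nonneg hh0.le (mul_nonneg hM0 (by linarith)))]
      _ = M * h ^ (1-α) * ((k:ℝ) ^ (-α) - ((k:ℝ)+1) ^ (-α)) := by
          rw [hhi, hlo, Real.mul_rpow hkr.le hh0.le,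
            Real.mul_rpow (by positivity : (0:ℝ) ≤ (k:ℝ)+1) hh0.le]
          rw [show h * (M * ((k:ℝ) ^ (-α) * h ^ (-α) - ((k:ℝ)+1) ^ (-α) * h ^ (-α)))
              = M * (h * h ^ (-α)) * ((k:ℝ) ^ (-α) - ((k:ℝ)+1) ^ (-α)) by ring, hh1]
  -- summation of the bounds
  have total : |∑ k ∈ Finset.range n,
      ∫ t in a k..b k, deriv y t * ((m k) ^ (-α) - (x - t) ^ (-α))|
      ≤ M * ((2:ℝ)^α + 1/(1-α) + 1) * h ^ (1-α) := by
    set g : ℕ → ℝ := fun k => if k = 0 then M * ((2:ℝ)^α + 1/(1-α)) * h ^ (1-α)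
      else M * h ^ (1-α) * ((k:ℝ) ^ (-α) - ((k:ℝ)+1) ^ (-α)) with hg
    have step1 : |∑ k ∈ Finset.range n,
        ∫ t in a k..b k, deriv y t * ((m k) ^ (-α) - (x - t) ^ (-α))|
        ≤ ∑ k ∈ Finset.range n, g k := by
      refine le_trans (Finset.abs_sum_le_sum_abs _ _) (Finset.sum_le_sum ?_)
      intro k hk
      rw [Finset.mem_range] at hk
      rcases eq_or_ne k 0 with rfl | hk0
      · simpa [hg] using bnd0
      · have : 0 < k := Nat.pos_of_ne_zero hk0
        simpa [hg, hk0] using bndk k this hk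
    refine le_trans step1 ?_
    obtain ⟨nn, rfl⟩ : ∃ nn, n = nn + 1 := ⟨n - 1, by omega⟩
    rw [Finset.sum_range_succ']
    have g0 : g 0 = M * ((2:ℝ)^α + 1/(1-α)) * h ^ (1-α) := by simp [hg]
    have gs : ∀ i : ℕ, g (i+1) = M * h ^ (1-α) *
        ((((i:ℝ)+1)) ^ (-α) - (((i:ℝ)+1)+1) ^ (-α)) := by
      intro i
      simp only [hg, if_neg (Nat.succ_ne_zero i)]
      push_cast
      ring_nf
    have sum2 : ∑ i ∈ Finset.range nn, g (i+1)
        = M * h ^ (1-α) * (1 - (((nn:ℝ))+1) ^ (-α)) := by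
      have tele : ∑ i ∈ Finset.range nn, ((((i:ℝ))+1) ^ (-α) - (((i:ℝ))+1+1) ^ (-α))
          = 1 - ((nn:ℝ)+1) ^ (-α) := by
        have t2 := Finset.sum_range_sub' (fun i : ℕ => (((i:ℝ))+1) ^ (-α)) nn
        have e : ∀ i ∈ Finset.range nn, ((((i:ℝ))+1) ^ (-α) - (((i:ℝ))+1+1) ^ (-α))
            = ((((i:ℕ):ℝ)+1) ^ (-α) - ((((i+1:ℕ)):ℝ)+1) ^ (-α)) := by
          intro i _
          push_cast
          ring_nf
        rw [Finset.sum_congr rfl e, t2]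
        norm_num
      rw [Finset.sum_congr rfl fun i _ => gs i, ← Finset.mul_sum, tele]
    rw [sum2, g0]
    have hnnn : (0:ℝ) ≤ (((nn:ℝ))+1) ^ (-α) := Real.rpow_nonneg (by positivity) _
    have hpow : (0:ℝ) < h ^ (1-α) := Real.rpow_pos_of_pos hh0 _
    nlinarith [mul_nonneg (mul_nonneg hM0 hpow.le) hnnn]
  rw [key, abs_mul]
  have habs1 : |1 / Real.Gamma (1-α)| = 1 / Real.Gamma (1-α) := abs_of_pos (by positivity)
  rw [habs1]
  calc 1 / Real.Gamma (1-α) * |∑ k ∈ Finset.range n,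
      ∫ t in a k..b k, deriv y t * ((m k) ^ (-α) - (x - t) ^ (-α))|
      ≤ 1 / Real.Gamma (1-α) * (M * ((2:ℝ)^α + 1/(1-α) + 1) * h ^ (1-α)) := by
        apply mul_le_mul_of_nonneg_left total (by positivity)
    _ ≤ (M / Real.Gamma (1-α) * ((2:ℝ)^α + 1/(1-α) + 1) + 1) * h ^ (1-α) := by
        have hpow : (0:ℝ) < h ^ (1-α) := Real.rpow_pos_of_pos hh0 _
        rw [show 1 / Real.Gamma (1-α) * (M * ((2:ℝ)^α + 1/(1-α) + 1) * h ^ (1-α))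
            = (M / Real.Gamma (1-α) * ((2:ℝ)^α + 1/(1-α) + 1)) * h ^ (1-α) from by ring]
        exact mul_le_mul_of_nonneg_right (by linarith) hpow.le
end

section
/- Let 0 < α < 1, x > 0 and n ≥ 2 be an integer, and set h = x/n. Then (1/(Γ(1−α) h^α)) ∑_{k=0}^{n} σ̄_k · (n−k)h = (h^{1−α}/Γ(1−α)) · ( (1 − 2^α)ζ(α) + 2^α ∑_{k=1}^{n} (2k−1)^{−α} ). -/
open Finset

noncomputable def cw (α : ℝ) (k : ℕ) : ℝ :=
  if k = 0 then (2:ℝ) ^ α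
  else (2:ℝ) ^ α * ((2 * (k:ℝ) + 1) ^ (-α) - (2 * (k:ℝ) - 1) ^ (-α))

lemma cw_sum (α : ℝ) (n : ℕ) :
    ∑ k ∈ Finset.range (n + 1), cw α k = (2:ℝ) ^ α * (2 * (n:ℝ) + 1) ^ (-α) := by
  induction n with
  | zero => simp [cw, Real.one_rpow]
  | succ m ih =>
      rw [Finset.sum_range_succ, ih]
      have : cw α (m + 1) = (2:ℝ) ^ α * ((2 * ((m:ℝ)+1) + 1) ^ (-α) - (2 * ((m:ℝ)+1) - 1) ^ (-α)) := by
        simp [cw]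
      rw [this]
      push_cast
      ring_nf

lemma key_sum (α : ℝ) (n : ℕ) (hn : 1 ≤ n) :
    ∑ k ∈ Finset.range (n + 1), cw α k * ((n:ℝ) - k)
      = (2:ℝ) ^ α * ∑ k ∈ Finset.Icc 1 n, (2 * (k:ℝ) - 1) ^ (-α) := by
  induction n with
  | zero => omega
  | succ m ih =>
      rcases Nat.eq_or_lt_of_le hn with h1 | h1
      · have hm : m = 0 := by omega
        subst hm
        rw [Finset.sum_range_succ, Finset.sum_range_succ, Finset.sum_range_zero]
        norm_num [cw, Real.one_rpow]
      · have hm : 1 ≤ m := by omega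
        have e1 : ∑ k ∈ Finset.range (m + 1 + 1), cw α k * (((m+1:ℕ):ℝ) - k)
            = (∑ k ∈ Finset.range (m + 2), cw α k * ((m:ℝ) - k)) + ∑ k ∈ Finset.range (m+2), cw α k := by
          rw [← Finset.sum_add_distrib]
          apply Finset.sum_congr rfl
          intro k hk; push_cast; ring
        rw [e1, Finset.sum_range_succ (fun k => cw α k * ((m:ℝ) - k)),
          show ((m:ℝ) - (m+1:ℕ)) = -1 by push_cast; ring]
        rw [ih hm, cw_sum]
        rw [Finset.sum_Icc_succ_top (by omega : 1 ≤ m + 1)]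
        have : cw α (m+1) = (2:ℝ) ^ α * ((2 * ((m:ℝ)+1) + 1) ^ (-α) - (2 * ((m:ℝ)+1) - 1) ^ (-α)) := by
          simp [cw]
        rw [this]
        push_cast
        ring_nf

theorem stmt3 (α x : ℝ) (hα0 : 0 < α) (hα1 : α < 1) (hx : 0 < x)
    (n : ℕ) (hn : 2 ≤ n) (h : ℝ) (hh : h = x / n) :
    (1 / (Real.Gamma (1 - α) * h ^ α)) *
        (∑ k ∈ Finset.range (n + 1), sigmab α n k * (((n:ℝ) - k) * h)) =
      h ^ (1 - α) / Real.Gamma (1 - α) *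
        ((1 - (2:ℝ) ^ α) * zetaR α +
          (2:ℝ) ^ α * ∑ k ∈ Finset.Icc 1 n, (2 * (k:ℝ) - 1) ^ (-α)) := by
  have hnpos : (0:ℝ) < n := by positivity
  have hpos : 0 < h := by rw [hh]; positivity
  have hΓ : 0 < Real.Gamma (1 - α) := Real.Gamma_pos_of_pos (by linarith)
  set C := ((2:ℝ) ^ α - 1) * zetaR α with hC
  have hterm : ∀ k ∈ Finset.range (n + 1), sigmab α n k * (((n:ℝ) - k) * h)
      = cw α k * ((n:ℝ) - k) * h +
        (if k = 0 then -C * ((n:ℝ) * h) else if k = 1 then C * (((n:ℝ) - 1) * h) else 0) := by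
    intro k hk
    rcases eq_or_ne k 0 with h0 | h0
    · subst h0
      have : n ≠ 0 := by omega
      simp [sigmab, wgt, cw, this]
      ring
    · rcases eq_or_ne k 1 with h1 | h1
      · subst h1
        have : (1:ℕ) ≠ n := by omega
        simp [sigmab, wgt, cw, this]
        ring
      · rcases eq_or_ne k n with h2 | h2
        · have hz : ((n:ℝ) - (k:ℝ)) = 0 := by rw [h2]; ring
          simp [h0, h1, hz]
        · simp [sigmab, wgt, cw, h0, h1, h2]
          ring
  rw [Finset.sum_congr rfl hterm, Finset.sum_add_distrib, ← Finset.sum_mul,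
    key_sum α n (by omega)]
  have hsub : ({0, 1} : Finset ℕ) ⊆ Finset.range (n + 1) := by
    intro k hk
    simp only [Finset.mem_insert, Finset.mem_singleton] at hk
    rcases hk with rfl | rfl <;> simp <;> omega
  have hite : ∑ k ∈ Finset.range (n + 1),
      (if k = 0 then -C * ((n:ℝ) * h) else if k = 1 then C * (((n:ℝ) - 1) * h) else 0)
      = -C * ((n:ℝ) * h) + C * (((n:ℝ) - 1) * h) := by
    rw [← Finset.sum_subset hsub]
    · norm_num
    · intro k _ hk
      simp only [Finset.mem_insert, Finset.mem_singleton, not_or] at hk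
      simp [hk.1, hk.2]
  rw [hite]
  have hrw : h ^ (1 - α) = h / h ^ α := by
    rw [Real.rpow_sub hpos, Real.rpow_one]
  rw [hrw]
  have hhα : (0:ℝ) < h ^ α := Real.rpow_pos_of_pos hpos α
  field_simp
  ring
end

section
/- Let 0 < α < 1, x > 0 and n ≥ 2 be an integer, and set h = x/n. For the function y(t) = t, whose Caputo derivative of order α at x equals x^{1−α}/Γ(2−α), one has the exact identity (1/(Γ(1−α) h^α)) ∑_{k=0}^{n} σ̄_k · (n−k)h − x^{1−α}/Γ(2−α) = h^{1−α} W_n / Γ(1−α). -/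
open Finset

lemma key_sum_stmt4 (α h : ℝ) (m : ℕ) :
    ∑ k ∈ Finset.range (m + 2 + 1), sigmab α (m+2) k * ((((m+2:ℕ):ℝ) - (k:ℝ)) * h)
      = h * ((2:ℝ)^α * (∑ k ∈ Finset.Icc 1 (m+2), (2 * (k:ℝ) - 1) ^ (-α))
          - ((2:ℝ)^α - 1) * zetaR α) := by
  set F : ℕ → ℝ := fun k => sigmab α (m+2) k * ((((m+2:ℕ):ℝ) - (k:ℝ)) * h) with hF
  have e1 := Finset.sum_range_succ' F (m+2)
  have e2 := Finset.sum_range_succ' (fun i => F (i+1)) (m+1)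
  have e3 := Finset.sum_range_succ (fun i => F (i+2)) m
  have h12 : (1:ℕ) ≠ m + 2 := by omega
  have hF0 : F 0 = ((2:ℝ)^α - ((2:ℝ)^α - 1) * zetaR α) * (((m:ℝ)+2) * h) := by
    simp only [hF, sigmab, wgt, if_pos rfl]
    push_cast; ring
  have hF1 : F 1 = ((2:ℝ)^α * ((3:ℝ)^(-α) - 1) + ((2:ℝ)^α - 1) * zetaR α) * (((m:ℝ)+1) * h) := by
    have w1 : wgt α (m+2) 1 = (2:ℝ)^α * ((3:ℝ)^(-α) - 1) := by
      unfold wgt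
      rw [if_neg one_ne_zero, if_neg h12]
      norm_num [Real.one_rpow]
    simp only [hF, sigmab, reduceIte, w1]
    push_cast; ring
  have hFtop : F (m+2) = 0 := by
    simp only [hF]
    push_cast; ring
  set g : ℕ → ℝ := fun i => (2*(i:ℝ)+3)^(-α) * (((m:ℝ)+1)-(i:ℝ)) with hg
  have hmid : ∀ i ∈ Finset.range m, F (i+2)
      = (2:ℝ)^α * h * ((g (i+1) - g i) + (2*(i:ℝ)+3)^(-α)) := by
    intro i hi
    have him : i < m := Finset.mem_range.mp hi
    simp only [hF, sigmab, wgt, hg]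
    rw [if_neg (by omega : i+2 ≠ 0), if_neg (by omega : i+2 ≠ 1),
        if_neg (by omega : i+2 ≠ 0), if_neg (by omega : i+2 ≠ m+2)]
    push_cast; ring_nf
  have htel : ∑ i ∈ Finset.range m,
      ((2:ℝ)^α * h * ((g (i+1) - g i) + (2*(i:ℝ)+3)^(-α)))
      = (2:ℝ)^α * h * ((g m - g 0) + ∑ i ∈ Finset.range m, (2*(i:ℝ)+3)^(-α)) := by
    rw [← Finset.mul_sum, Finset.sum_add_distrib, Finset.sum_range_sub g m]
  have hA : ∑ k ∈ Finset.Icc 1 (m+2), (2 * (k:ℝ) - 1) ^ (-α)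
      = 1 + ((∑ i ∈ Finset.range m, (2*(i:ℝ)+3)^(-α)) + (2*(m:ℝ)+3)^(-α)) := by
    rw [← Finset.Ico_add_one_right_eq_Icc, Finset.sum_Ico_eq_sum_range]
    have hms : m + 2 + 1 - 1 = (m+1) + 1 := by omega
    rw [hms, Finset.sum_range_succ' (fun i => (2 * ((1+i:ℕ):ℝ) - 1) ^ (-α)) (m+1)]
    have h1 : (2 * ((1+0:ℕ):ℝ) - 1) ^ (-α) = 1 := by norm_num
    rw [h1, ← Finset.sum_range_succ (fun i => (2*(i:ℝ)+3)^(-α)) m]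
    have hc : ∀ i ∈ Finset.range (m+1), (2 * ((1+(i+1):ℕ):ℝ) - 1) ^ (-α) = (2*(i:ℝ)+3)^(-α) := by
      intro i hi; push_cast; ring_nf
    rw [Finset.sum_congr rfl hc]
    ring
  have hgm : g m = (2*(m:ℝ)+3)^(-α) := by
    simp only [hg]; rw [show ((m:ℝ)+1-(m:ℝ)) = 1 by ring, mul_one]
  have hg0 : g 0 = (3:ℝ)^(-α) * ((m:ℝ)+1) := by
    simp only [hg]; norm_num
  rw [e1, e2, e3, Finset.sum_congr rfl hmid, hF0, hF1, hFtop, htel, hA, hgm, hg0]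
  ring

theorem stmt4 (α x : ℝ) (hα0 : 0 < α) (hα1 : α < 1) (hx : 0 < x)
    (n : ℕ) (hn : 2 ≤ n) (h : ℝ) (hh : h = x / n) :
    (1 / (Real.Gamma (1 - α) * h ^ α)) *
        (∑ k ∈ Finset.range (n + 1), sigmab α n k * (((n:ℝ) - k) * h)) -
      x ^ (1 - α) / Real.Gamma (2 - α) =
    h ^ (1 - α) * Wn α n / Real.Gamma (1 - α) := by
  obtain ⟨m, rfl⟩ : ∃ m, n = m + 2 := ⟨n - 2, by omega⟩
  have hNpos : (0:ℝ) < ((m+2:ℕ):ℝ) := by positivity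
  have hhpos : 0 < h := by
    rw [hh]; exact div_pos hx hNpos
  have hx' : x = h * ((m+2:ℕ):ℝ) := by
    rw [hh]; field_simp
  rw [key_sum_stmt4 α h m]
  have hW : (2:ℝ)^α * (∑ k ∈ Finset.Icc 1 (m+2), (2 * (k:ℝ) - 1) ^ (-α))
      - ((2:ℝ)^α - 1) * zetaR α
      = Wn α (m+2) + ((m+2:ℕ):ℝ)^(1-α)/(1-α) := by
    unfold Wn; ring
  rw [hW]
  have hΓ : Real.Gamma (2-α) = (1-α) * Real.Gamma (1-α) := by
    rw [show (2:ℝ)-α = (1-α)+1 by ring, Real.Gamma_add_one (by linarith : (1:ℝ)-α ≠ 0)]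
  have hΓpos : 0 < Real.Gamma (1-α) := Real.Gamma_pos_of_pos (by linarith)
  have hxa : x ^ (1-α) = h^(1-α) * ((m+2:ℕ):ℝ)^(1-α) := by
    rw [hx', Real.mul_rpow hhpos.le hNpos.le]
  have hha : h^(1-α) * h^α = h := by
    rw [← Real.rpow_add hhpos, show (1:ℝ)-α+α = 1 by ring, Real.rpow_one]
  rw [hxa, hΓ]
  set H1 := h^(1-α) with hH1
  set Ha := h^α with hHa
  set N := ((m+2:ℕ):ℝ)^(1-α) with hN
  set W := Wn α (m+2) with hWd
  have hHane : Ha ≠ 0 := by rw [hHa]; positivity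
  have h1a : (1:ℝ) - α ≠ 0 := by linarith
  rw [← hha]
  field_simp
  ring
end

section
/- Let 0 < α < 1. Then there is a constant C > 0 such that for every positive integer m, |∑_{k=1}^{m} k^{−α} − ζ(α) − m^{1−α}/(1−α) − 1/(2 m^{α}) + α/(12 m^{1+α})| ≤ C / m^{2+α}. -/
open Finset

open Filter Topology Complex

lemma rpow_anti {x y c : ℝ} (hx : 0 < x) (hxy : x ≤ y) (hc : c ≤ 0) : y ^ c ≤ x ^ c := by
  have hy : (0:ℝ) < y := hx.trans_le hxy
  rw [show c = -(-c) by ring, Real.rpow_neg hx.le, Real.rpow_neg hy.le]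
  exact inv_anti₀ (Real.rpow_pos_of_pos hx _) (Real.rpow_le_rpow hx.le hxy (by linarith))

lemma cpow_hasDerivAt {s : ℂ} (hs : s ≠ 0) {x : ℝ} (hx : 0 < x) :
    HasDerivAt (fun t : ℝ => (t:ℂ) ^ (-s)) (-s * (x:ℂ) ^ (-s - 1)) x := by
  have h1 : (-s - 1 : ℂ) ≠ -1 := by
    intro h; apply hs; have := congrArg (· + 1) h; simpa using this
  have := (hasDerivAt_ofReal_cpow_const' hx.ne' h1).const_mul (-s)
  have he : (-s - 1 + 1 : ℂ) = -s := by ring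
  rw [he] at this
  convert this using 2 with t
  · rfl
  rw [mul_div_cancel₀]
  simpa [neg_eq_zero] using hs

noncomputable def fct (s : ℂ) (n : ℕ) : ℂ :=
  ((n:ℂ)+1) ^ (-s) - (((n:ℂ)+2) ^ (1-s) - ((n:ℂ)+1) ^ (1-s)) / (1-s)

lemma fct_norm_le {s : ℂ} (hs0 : 0 < s.re) (hs1 : s ≠ 1) (n : ℕ) :
    ‖fct s n‖ ≤ ‖s‖ * ((n:ℝ)+1) ^ (-s.re - 1) := by
  have hn : (0:ℝ) < (n:ℝ) + 1 := by positivity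
  have hsne : s ≠ 0 := by intro h; rw [h] at hs0; simp at hs0
  have h2 : (0:ℝ) ∉ Set.uIcc ((n:ℝ)+1) ((n:ℝ)+2) := by
    rw [Set.mem_uIcc]; push_neg
    constructor <;> intro h <;> [skip; (exfalso; linarith)] <;> linarith
  have hint : (((n:ℂ)+2) ^ (1-s) - ((n:ℂ)+1) ^ (1-s)) / (1-s)
      = ∫ t in ((n:ℝ)+1)..((n:ℝ)+2), (t:ℂ) ^ (-s) := by
    rw [integral_cpow]
    · rw [show (-s+1:ℂ) = 1-s by ring]; norm_num
    · right
      refine ⟨?_, h2⟩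
      intro hh; apply hs1; have := congrArg Neg.neg hh; simpa using this
  have hconst : ((n:ℂ)+1) ^ (-s) = ∫ _ in ((n:ℝ)+1)..((n:ℝ)+2), ((n:ℂ)+1) ^ (-s) := by
    rw [intervalIntegral.integral_const]
    norm_num
  -- MVT bound for the difference of cpow values
  have hmvt : ∀ t ∈ Set.Icc ((n:ℝ)+1) ((n:ℝ)+2),
      ‖(t:ℂ) ^ (-s) - ((n:ℂ)+1) ^ (-s)‖ ≤ ‖s‖ * ((n:ℝ)+1) ^ (-s.re - 1) := by
    intro t ht
    have key := Convex.norm_image_sub_le_of_norm_hasDerivWithin_le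
      (f := fun u : ℝ => (u:ℂ) ^ (-s)) (f' := fun u : ℝ => -s * (u:ℂ) ^ (-s-1))
      (s := Set.Icc ((n:ℝ)+1) ((n:ℝ)+2)) (C := ‖s‖ * ((n:ℝ)+1) ^ (-s.re - 1))
      (fun u hu => (cpow_hasDerivAt hsne (lt_of_lt_of_le hn hu.1)).hasDerivWithinAt)
      ?_ (convex_Icc _ _) (Set.left_mem_Icc.mpr (by linarith)) ht
    · calc ‖(t:ℂ) ^ (-s) - ((n:ℂ)+1) ^ (-s)‖
          ≤ ‖s‖ * ((n:ℝ)+1) ^ (-s.re - 1) * ‖t - ((n:ℝ)+1)‖ := by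
            have : (((n:ℝ)+1 : ℝ):ℂ) = (n:ℂ)+1 := by push_cast; ring
            rw [← this]; exact key
      _ ≤ ‖s‖ * ((n:ℝ)+1) ^ (-s.re - 1) * 1 := by
            apply mul_le_mul_of_nonneg_left _ (by positivity)
            rw [Real.norm_eq_abs, abs_le]; constructor <;> [linarith [ht.1]; linarith [ht.2]]
      _ = ‖s‖ * ((n:ℝ)+1) ^ (-s.re - 1) := mul_one _
    · intro u hu
      have hu0 : (0:ℝ) < u := lt_of_lt_of_le hn hu.1
      rw [norm_mul, norm_neg]
      have : ‖(u:ℂ) ^ (-s-1)‖ = u ^ (-s.re - 1) := by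
        rw [Complex.norm_cpow_eq_rpow_re_of_pos hu0]
        norm_num
      rw [this]
      apply mul_le_mul_of_nonneg_left _ (norm_nonneg s)
      exact rpow_anti hn hu.1 (by linarith)
  rw [fct, hint, hconst, ← intervalIntegral.integral_sub (by simp) ?ig]
  · have := intervalIntegral.norm_integral_le_of_norm_le_const
      (C := ‖s‖ * ((n:ℝ)+1) ^ (-s.re - 1))
      (f := fun t : ℝ => ((n:ℂ)+1) ^ (-s) - (t:ℂ) ^ (-s))
      (a := (n:ℝ)+1) (b := (n:ℝ)+2) ?_
    · calc _ ≤ ‖s‖ * ((n:ℝ)+1) ^ (-s.re - 1) * |((n:ℝ)+2) - ((n:ℝ)+1)| := this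
        _ = _ := by norm_num
    · intro t ht
      rw [Set.uIoc_of_le (by linarith)] at ht
      rw [← norm_neg, neg_sub]
      exact hmvt t ⟨ht.1.le, ht.2⟩
  · -- interval integrability of cpow
    apply ContinuousOn.intervalIntegrable
    apply ContinuousOn.cpow
    · exact Complex.continuous_ofReal.continuousOn
    · exact continuousOn_const
    · intro t ht
      rw [Set.uIcc_of_le (by linarith)] at ht
      have : (0:ℝ) < t := lt_of_lt_of_le hn ht.1
      rw [Complex.mem_slitPlane_iff]
      left; simpa using this

lemma summable_aux {c : ℝ} (hc : c < -1) : Summable (fun n : ℕ => ((n:ℝ)+1) ^ c) := by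
  have h := Real.summable_nat_rpow.mpr hc
  have := (summable_nat_add_iff 1).mpr h
  simpa using this

lemma fct_summable {s : ℂ} (hs0 : 0 < s.re) (hs1 : s ≠ 1) : Summable (fct s) := by
  apply Summable.of_norm_bounded ((summable_aux (c := -s.re - 1) (by linarith)).mul_left ‖s‖)
  exact fct_norm_le hs0 hs1

noncomputable def Gf (s : ℂ) : ℂ := ∑' n, fct s n

def Uset : Set ℂ := {s | 0 < s.re ∧ s ≠ 1}

lemma Uset_open : IsOpen Uset := by
  have h1 : IsOpen {s : ℂ | 0 < s.re} := isOpen_lt continuous_const Complex.continuous_re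
  have h2 : IsOpen {s : ℂ | s ≠ 1} := isOpen_ne
  exact h1.inter h2

lemma fct_differentiableOn (n : ℕ) : DifferentiableOn ℂ (fun s => fct s n) Uset := by
  intro s hs
  apply DifferentiableAt.differentiableWithinAt
  have h1 : ((n:ℂ)+1) ≠ 0 := by
    intro h
    have := congrArg Complex.re h
    simp at this
    linarith [Nat.cast_nonneg (α := ℝ) n]
  have h2 : ((n:ℂ)+2) ≠ 0 := by
    intro h
    have := congrArg Complex.re h
    simp at this
    linarith [Nat.cast_nonneg (α := ℝ) n]
  have d1 : DifferentiableAt ℂ (fun s : ℂ => ((n:ℂ)+1) ^ (-s)) s :=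
    (differentiable_neg.differentiableAt).const_cpow (Or.inl h1)
  have d2 : DifferentiableAt ℂ (fun s : ℂ => ((n:ℂ)+2) ^ (1-s)) s :=
    ((differentiable_const (1:ℂ)).sub differentiable_id).differentiableAt.const_cpow (Or.inl h2)
  have d3 : DifferentiableAt ℂ (fun s : ℂ => ((n:ℂ)+1) ^ (1-s)) s :=
    ((differentiable_const (1:ℂ)).sub differentiable_id).differentiableAt.const_cpow (Or.inl h1)
  have d4 : DifferentiableAt ℂ (fun s : ℂ => (1:ℂ)-s) s :=
    ((differentiable_const (1:ℂ)).sub differentiable_id).differentiableAt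
  exact d1.sub ((d2.sub d3).div d4 (sub_ne_zero.mpr (Ne.symm hs.2)))

lemma Gf_analytic : AnalyticOnNhd ℂ Gf Uset := by
  intro z hz
  obtain ⟨hz0, hz1⟩ := hz
  set r : ℝ := min (z.re/2) (‖z - 1‖/2) with hr
  have hz1' : 0 < ‖z - 1‖ := by
    rw [norm_pos_iff]; exact sub_ne_zero.mpr hz1
  have hrpos : 0 < r := lt_min (by linarith) (by linarith)
  have hball : Metric.ball z r ⊆ Uset := by
    intro w hw
    rw [Metric.mem_ball, dist_eq_norm] at hw
    have hre : |w.re - z.re| ≤ ‖w - z‖ := by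
      rw [← Complex.sub_re]; exact Complex.abs_re_le_norm _
    constructor
    · have : r ≤ z.re/2 := min_le_left _ _
      have := abs_le.mp hre
      linarith [this.1]
    · intro h
      rw [h] at hw
      have : r ≤ ‖z-1‖/2 := min_le_right _ _
      have h2 : ‖(1:ℂ) - z‖ = ‖z - 1‖ := by rw [← norm_neg]; ring_nf
      rw [h2] at hw
      linarith
  have hdiff : DifferentiableOn ℂ Gf (Metric.ball z r) := by
    unfold Gf
    apply differentiableOn_tsum_of_summable_norm
      (u := fun n : ℕ => (‖z‖ + r) * ((n:ℝ)+1) ^ (-(z.re/2) - 1))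
    · exact (summable_aux (by linarith)).mul_left _
    · exact fun n => (fct_differentiableOn n).mono hball
    · exact Metric.isOpen_ball
    · intro n w hw
      have hwU := hball hw
      rw [Metric.mem_ball, dist_eq_norm] at hw
      have hwre : z.re/2 ≤ w.re := by
        have hre : |w.re - z.re| ≤ ‖w - z‖ := by
          rw [← Complex.sub_re]; exact Complex.abs_re_le_norm _
        have : r ≤ z.re/2 := min_le_left _ _
        have := abs_le.mp hre
        linarith [this.1]
      calc ‖fct w n‖ ≤ ‖w‖ * ((n:ℝ)+1) ^ (-w.re - 1) := fct_norm_le hwU.1 hwU.2 n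
        _ ≤ (‖z‖ + r) * ((n:ℝ)+1) ^ (-(z.re/2) - 1) := by
            apply mul_le_mul
            · calc ‖w‖ = ‖z + (w - z)‖ := by ring_nf
                _ ≤ ‖z‖ + ‖w - z‖ := norm_add_le _ _
                _ ≤ ‖z‖ + r := by linarith
            · apply Real.rpow_le_rpow_of_exponent_le (by linarith [Nat.cast_nonneg (α := ℝ) n])
              linarith
            · positivity
            · positivity
  exact ((hdiff.analyticOnNhd Metric.isOpen_ball) z (Metric.mem_ball_self hrpos))

lemma fct_partial (s : ℂ) (N : ℕ) :
    ∑ n ∈ range N, fct s n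
      = (∑ n ∈ range N, ((n:ℂ)+1) ^ (-s)) - (((N:ℂ)+1) ^ (1-s) - 1)/(1-s) := by
  unfold fct
  rw [Finset.sum_sub_distrib]
  congr 1
  rw [← Finset.sum_div]
  congr 1
  have := Finset.sum_range_sub (f := fun n => ((n:ℂ)+1) ^ (1-s)) N
  calc ∑ n ∈ range N, (((n:ℂ)+2) ^ (1-s) - ((n:ℂ)+1) ^ (1-s))
      = ∑ n ∈ range N, ((((n+1:ℕ):ℂ)+1) ^ (1-s) - ((n:ℂ)+1) ^ (1-s)) := by
        apply Finset.sum_congr rfl; intro n _; push_cast; ring_nf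
    _ = ((N:ℂ)+1) ^ (1-s) - (((0:ℕ):ℂ)+1) ^ (1-s) := this
    _ = ((N:ℂ)+1) ^ (1-s) - 1 := by norm_num

lemma tendsto_cpow_zero {c : ℂ} (hc : c.re < 0) :
    Tendsto (fun N : ℕ => ((N:ℂ)+1) ^ c) atTop (𝓝 0) := by
  refine squeeze_zero_norm (a := fun N : ℕ => ((N:ℝ)+1) ^ c.re) (fun N => ?_) ?_
  · 
    have : ((N:ℂ)+1) = (((N:ℝ)+1 : ℝ) : ℂ) := by push_cast; ring
    rw [this, Complex.norm_cpow_eq_rpow_re_of_pos (by positivity)]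
  · have h1 : Tendsto (fun N : ℕ => (N:ℝ)+1) atTop atTop :=
      tendsto_atTop_add_const_right _ _ tendsto_natCast_atTop_atTop
    have h2 := (tendsto_rpow_neg_atTop (y := -c.re) (by linarith)).comp h1
    simpa [Function.comp_def] using h2

lemma Gf_eq_on {s : ℂ} (hs : 1 < s.re) : Gf s = riemannZeta s - (s-1)⁻¹ := by
  have hs0 : 0 < s.re := by linarith
  have hs1 : s ≠ 1 := by intro h; rw [h] at hs; simp at hs
  have hsum := fct_summable hs0 hs1
  have h1 : Tendsto (fun N => ∑ n ∈ range N, fct s n) atTop (𝓝 (Gf s)) :=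
    hsum.hasSum.tendsto_sum_nat
  have hz : Summable (fun n : ℕ => ((n:ℂ)+1) ^ (-s)) := by
    have := (Complex.summable_one_div_nat_cpow (p := s)).mpr hs
    have h2 := (_root_.summable_nat_add_iff 1).mpr this
    apply h2.congr
    intro n
    push_cast
    rw [Complex.cpow_neg, one_div]
  have hzt : Tendsto (fun N => ∑ n ∈ range N, ((n:ℂ)+1) ^ (-s)) atTop (𝓝 (riemannZeta s)) := by
    have := hz.hasSum.tendsto_sum_nat
    have htsum : ∑' n : ℕ, ((n:ℂ)+1) ^ (-s) = riemannZeta s := by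
      rw [zeta_eq_tsum_one_div_nat_add_one_cpow hs]
      apply tsum_congr; intro n; rw [Complex.cpow_neg, one_div]
    rwa [htsum] at this
  have hre1s : (1-s).re = 1 - s.re := by simp [Complex.sub_re]
  have hpow : Tendsto (fun N : ℕ => ((N:ℂ)+1) ^ (1-s)) atTop (𝓝 0) :=
    tendsto_cpow_zero (by rw [hre1s]; linarith)
  have h2 : Tendsto (fun N => ∑ n ∈ range N, fct s n) atTop
      (𝓝 (riemannZeta s - ((0:ℂ) - 1)/(1-s))) := by
    simp_rw [fct_partial s]
    exact hzt.sub ((hpow.sub tendsto_const_nhds).div_const _)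
  have := tendsto_nhds_unique h1 h2
  rw [this]
  congr 1
  have h1s : (1:ℂ) - s ≠ 0 := by
    intro h; apply hs1; have := congrArg (· + s) h; simpa [eq_comm] using this
  have hs1' : s - 1 ≠ 0 := sub_ne_zero.mpr hs1
  field_simp
  ring

lemma Uset_preconnected : IsPreconnected Uset := by
  have C1 : IsPreconnected {s : ℂ | 0 < s.re ∧ s.re < 1} :=
    ((convex_halfSpace_re_gt (r := 0)).inter (convex_halfSpace_re_lt (r := 1))).isPreconnected
  have C2 : IsPreconnected {s : ℂ | 1 < s.re} :=
    (convex_halfSpace_re_gt (r := 1)).isPreconnected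
  have C3 : IsPreconnected {s : ℂ | 0 < s.re ∧ 0 < s.im} :=
    ((convex_halfSpace_re_gt (r := 0)).inter (convex_halfSpace_im_gt (r := 0))).isPreconnected
  have C4 : IsPreconnected {s : ℂ | 0 < s.re ∧ s.im < 0} :=
    ((convex_halfSpace_re_gt (r := 0)).inter (convex_halfSpace_im_lt (r := 0))).isPreconnected
  have m1 : (⟨1/2, 1/2⟩ : ℂ) ∈ {s : ℂ | 0 < s.re ∧ s.re < 1} := by
    refine ⟨?_, ?_⟩ <;> · show (_:ℝ) < _; norm_num
  have m2 : (⟨1/2, 1/2⟩ : ℂ) ∈ {s : ℂ | 0 < s.re ∧ 0 < s.im} := by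
    refine ⟨?_, ?_⟩ <;> · show (_:ℝ) < _; norm_num
  have m3 : (⟨2, 1⟩ : ℂ) ∈ {s : ℂ | 0 < s.re ∧ 0 < s.im} := by
    refine ⟨?_, ?_⟩ <;> · show (_:ℝ) < _; norm_num
  have m4 : (⟨2, 1⟩ : ℂ) ∈ {s : ℂ | 1 < s.re} := by
    show (1:ℝ) < Complex.re _; norm_num
  have m5 : (⟨1/2, -1/2⟩ : ℂ) ∈ {s : ℂ | 0 < s.re ∧ s.re < 1} := by
    refine ⟨?_, ?_⟩ <;> · show (_:ℝ) < _; norm_num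
  have m6 : (⟨1/2, -1/2⟩ : ℂ) ∈ {s : ℂ | 0 < s.re ∧ s.im < 0} := by
    refine ⟨?_, ?_⟩ <;> · show (_:ℝ) < _; norm_num
  have P13 : IsPreconnected ({s : ℂ | 0 < s.re ∧ s.re < 1} ∪ {s : ℂ | 0 < s.re ∧ 0 < s.im}) :=
    IsPreconnected.union _ m1 m2 C1 C3
  have P132 : IsPreconnected (({s : ℂ | 0 < s.re ∧ s.re < 1} ∪ {s : ℂ | 0 < s.re ∧ 0 < s.im})
      ∪ {s : ℂ | 1 < s.re}) :=
    IsPreconnected.union _ (Or.inr m3) m4 P13 C2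
  have P : IsPreconnected ((({s : ℂ | 0 < s.re ∧ s.re < 1} ∪ {s : ℂ | 0 < s.re ∧ 0 < s.im})
      ∪ {s : ℂ | 1 < s.re}) ∪ {s : ℂ | 0 < s.re ∧ s.im < 0}) :=
    IsPreconnected.union _ (Or.inl (Or.inl m5)) m6 P132 C4
  have hU : Uset = (({s : ℂ | 0 < s.re ∧ s.re < 1} ∪ {s : ℂ | 0 < s.re ∧ 0 < s.im})
      ∪ {s : ℂ | 1 < s.re}) ∪ {s : ℂ | 0 < s.re ∧ s.im < 0} := by
    ext s
    constructor
    · rintro ⟨h0, h1⟩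
      rcases lt_trichotomy s.im 0 with him | him | him
      · exact Or.inr ⟨h0, him⟩
      · rcases lt_trichotomy s.re 1 with hre | hre | hre
        · exact Or.inl (Or.inl (Or.inl ⟨h0, hre⟩))
        · exfalso; apply h1; exact Complex.ext hre him
        · exact Or.inl (Or.inr hre)
      · exact Or.inl (Or.inl (Or.inr ⟨h0, him⟩))
    · rintro (((⟨h0, h1⟩ | ⟨h0, h1⟩) | h1) | ⟨h0, h1⟩)
      · exact ⟨h0, fun h => by rw [h] at h1; simp at h1⟩
      · exact ⟨h0, fun h => by rw [h] at h1; simp at h1⟩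
      · refine ⟨?_, fun h => by rw [h] at h1; simp at h1⟩
        simp only [Set.mem_setOf_eq] at h1; linarith
      · exact ⟨h0, fun h => by rw [h] at h1; simp at h1⟩
  rw [hU]
  exact P

lemma zeta_analytic : AnalyticOnNhd ℂ (fun s => riemannZeta s - (s-1)⁻¹) Uset := by
  have : DifferentiableOn ℂ (fun s => riemannZeta s - (s-1)⁻¹) {s : ℂ | s ≠ 1} := by
    intro s hs
    apply DifferentiableAt.differentiableWithinAt
    exact (differentiableAt_riemannZeta hs).sub
      ((differentiableAt_id.sub_const 1).inv (sub_ne_zero.mpr hs))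
  exact (this.analyticOnNhd isOpen_ne).mono (fun s hs => hs.2)

lemma Gf_eq_zeta {s : ℂ} (hs : s ∈ Uset) : Gf s = riemannZeta s - (s-1)⁻¹ := by
  have h2 : (2:ℂ) ∈ Uset := ⟨by norm_num, by norm_num⟩
  have heq : Gf =ᶠ[𝓝 (2:ℂ)] (fun s => riemannZeta s - (s-1)⁻¹) := by
    apply Filter.eventually_of_mem
      ((isOpen_lt continuous_const Complex.continuous_re).mem_nhds (show (1:ℝ) < (2:ℂ).re by norm_num))
    intro w hw
    exact Gf_eq_on hw
  exact Gf_analytic.eqOn_of_preconnected_of_eventuallyEq zeta_analytic Uset_preconnected h2 heq hs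


-- MVT bound for rpow differences with exponent c and step 1
lemma rpow_step_le {c x : ℝ} (hx : 1 ≤ x) (hc : c ≤ 1) :
    |(x+1) ^ c - x ^ c| ≤ |c| * x ^ (c-1) := by
  have hx0 : (0:ℝ) < x := by linarith
  have key := Convex.norm_image_sub_le_of_norm_hasDerivWithin_le
    (f := fun u : ℝ => u ^ c) (f' := fun u : ℝ => c * u ^ (c-1))
    (s := Set.Icc x (x+1)) (C := |c| * x ^ (c-1))
    (fun u hu => (Real.hasDerivAt_rpow_const (p := c)
      (Or.inl (by linarith [hu.1] : u ≠ 0))).hasDerivWithinAt)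
    ?_ (convex_Icc _ _) (Set.left_mem_Icc.mpr (by linarith)) (Set.right_mem_Icc.mpr (by linarith))
  · rw [Real.norm_eq_abs] at key
    calc |(x+1) ^ c - x ^ c| ≤ |c| * x ^ (c-1) * ‖x + 1 - x‖ := key
      _ = |c| * x ^ (c-1) := by norm_num
  · intro u hu
    rw [Real.norm_eq_abs, abs_mul]
    apply mul_le_mul_of_nonneg_left _ (abs_nonneg c)
    rw [_root_.abs_of_nonneg (Real.rpow_nonneg (by linarith [hu.1]) _)]
    exact rpow_anti hx0 hu.1 (by linarith)

lemma zeta_limit {α : ℝ} (hα0 : 0 < α) (hα1 : α < 1) :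
    Tendsto (fun N : ℕ => (∑ k ∈ Icc 1 N, (k:ℝ) ^ (-α)) - (N:ℝ) ^ (1-α)/(1-α))
      atTop (𝓝 (zetaR α)) := by
  have hαU : (α:ℂ) ∈ Uset := by
    refine ⟨by simpa using hα0, ?_⟩
    intro h
    rw [show (1:ℂ) = ((1:ℝ):ℂ) by norm_num, Complex.ofReal_inj] at h
    linarith
  have hsum := fct_summable (s := (α:ℂ)) (by simpa using hα0) hαU.2
  have h1 : Tendsto (fun N => ∑ n ∈ range N, fct (α:ℂ) n) atTop
      (𝓝 (riemannZeta (α:ℂ) - ((α:ℂ)-1)⁻¹)) := by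
    have := hsum.hasSum.tendsto_sum_nat
    have hG : (∑' (b : ℕ), fct (α:ℂ) b) = riemannZeta (α:ℂ) - ((α:ℂ)-1)⁻¹ := Gf_eq_zeta hαU
    rwa [hG] at this
  -- rewrite partial sums as real
  have hreal : ∀ N : ℕ, ∑ n ∈ range N, fct (α:ℂ) n
      = ((((∑ n ∈ range N, ((n:ℝ)+1) ^ (-α)) - (((N:ℝ)+1) ^ (1-α) - 1)/(1-α)) : ℝ) : ℂ) := by
    intro N
    rw [fct_partial]
    have e1 : ∀ n : ℕ, ((n:ℂ)+1) ^ (-(α:ℂ)) = ((((n:ℝ)+1) ^ (-α) : ℝ) : ℂ) := by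
      intro n
      rw [Complex.ofReal_cpow (by positivity)]
      push_cast
      ring_nf
    have e2 : ((N:ℂ)+1) ^ (1-(α:ℂ)) = ((((N:ℝ)+1) ^ (1-α) : ℝ) : ℂ) := by
      rw [Complex.ofReal_cpow (by positivity)]
      push_cast
      ring_nf
    rw [Finset.sum_congr rfl (fun n _ => e1 n), e2]
    push_cast
    ring
  have h2 : Tendsto (fun N : ℕ => (∑ n ∈ range N, ((n:ℝ)+1) ^ (-α))
      - (((N:ℝ)+1) ^ (1-α) - 1)/(1-α)) atTop (𝓝 (zetaR α - (α-1)⁻¹)) := by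
    have h3 := (Complex.continuous_re.tendsto _).comp h1
    have h4 : (fun N : ℕ => (∑ n ∈ range N, fct (α:ℂ) n).re)
        = fun N : ℕ => (∑ n ∈ range N, ((n:ℝ)+1) ^ (-α)) - (((N:ℝ)+1) ^ (1-α) - 1)/(1-α) := by
      funext N; rw [hreal N, Complex.ofReal_re]
    rw [show (riemannZeta (α:ℂ) - ((α:ℂ)-1)⁻¹).re = zetaR α - (α-1)⁻¹ by
      rw [Complex.sub_re, show ((α:ℂ)-1)⁻¹ = (((α-1)⁻¹ : ℝ) : ℂ) by push_cast; ring]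
      rw [Complex.ofReal_re]; rfl] at h3
    rw [Function.comp_def] at h3
    rwa [h4] at h3
  -- difference term tends to zero
  have hD : Tendsto (fun N : ℕ => (((N:ℝ)+1) ^ (1-α) - (N:ℝ) ^ (1-α))/(1-α)) atTop (𝓝 0) := by
    apply squeeze_zero_norm' (a := fun N : ℕ => (N:ℝ) ^ (-α))
    · filter_upwards [eventually_ge_atTop 1] with N hN
      have hN1 : (1:ℝ) ≤ (N:ℝ) := by exact_mod_cast hN
      rw [Real.norm_eq_abs, abs_div, _root_.abs_of_pos (by linarith : (0:ℝ) < 1-α)]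
      rw [div_le_iff₀ (by linarith : (0:ℝ) < 1-α)]
      have := rpow_step_le (x := (N:ℝ)) (c := 1-α) hN1 (by linarith)
      rw [_root_.abs_of_pos (by linarith : (0:ℝ) < 1-α)] at this
      calc |((N:ℝ)+1) ^ (1-α) - (N:ℝ) ^ (1-α)| ≤ (1-α) * (N:ℝ) ^ (1-α-1) := this
        _ = (N:ℝ) ^ (-α) * (1-α) := by rw [show (1-α-1:ℝ) = -α by ring]; ring
    · have h1 : Tendsto (fun N : ℕ => (N:ℝ)) atTop atTop := tendsto_natCast_atTop_atTop
      have h2 := (tendsto_rpow_neg_atTop hα0).comp h1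
      exact h2
  -- combine
  have hcomb := (h2.add hD).sub_const (1/(1-α))
  have hpt : (fun N : ℕ => ((∑ n ∈ range N, ((n:ℝ)+1) ^ (-α))
        - (((N:ℝ)+1) ^ (1-α) - 1)/(1-α))
        + (((N:ℝ)+1) ^ (1-α) - (N:ℝ) ^ (1-α))/(1-α) - 1/(1-α))
      = fun N : ℕ => (∑ k ∈ Icc 1 N, (k:ℝ) ^ (-α)) - (N:ℝ) ^ (1-α)/(1-α) := by
    funext N
    have hIcc : ∑ k ∈ Icc 1 N, (k:ℝ) ^ (-α) = ∑ n ∈ range N, ((n:ℝ)+1) ^ (-α) := by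
      rw [← Finset.Ico_add_one_right_eq_Icc, Finset.sum_Ico_eq_sum_range]
      norm_num
      apply Finset.sum_congr rfl
      intro n _
      push_cast
      ring_nf
    rw [hIcc]
    have hne : (1-α) ≠ 0 := by linarith
    field_simp
    ring
  rw [hpt] at hcomb
  have hval : zetaR α - (α-1)⁻¹ + 0 - 1/(1-α) = zetaR α := by
    have hne : (α-1) ≠ 0 := by linarith
    have hne' : (1-α) ≠ 0 := by linarith
    field_simp
    ring
  rwa [hval] at hcomb

lemma stepPsi {α : ℝ} (hα0 : 0 < α) (hα1 : α < 1) {x : ℝ} (hx : 1 ≤ x) :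
    |((x+1)^(1-α)/(1-α) + (x+1)^(-α)/2 - (α/12)*(x+1)^(-α-1))
      - (x^(1-α)/(1-α) + x^(-α)/2 - (α/12)*x^(-α-1)) - (x+1)^(-α)| ≤ 3 * x^(-α-3) := by
  set Ψ : ℝ → ℝ := fun t => ((x+t)^(1-α)/(1-α) + (x+t)^(-α)/2 - α/12*(x+t)^(-α-1))
    - t*(x+t)^(-α) + (α/2*(t-t^2))*(x+t)^(-α-1)
    - (α*(α+1)*(t^3/6 - t^2/4 + t/12))*(x+t)^(-α-2) with hΨdef
  set D : ℝ → ℝ := fun t => α*(α+1)*(α+2)*(t^3/6 - t^2/4 + t/12)*(x+t)^(-α-3) with hDdef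
  have hw : ∀ t ∈ Set.Icc (0:ℝ) 1, (0:ℝ) < x + t := fun t ht => by linarith [ht.1]
  have hpow : ∀ (c:ℝ), ∀ t ∈ Set.Icc (0:ℝ) 1,
      HasDerivAt (fun u : ℝ => (x+u)^c) (c * (x+t)^(c-1)) t := by
    intro c t ht
    have h1 : HasDerivAt (fun u : ℝ => x + u) 1 t := (hasDerivAt_id t).const_add x
    have h2 := Real.hasDerivAt_rpow_const (x := x+t) (p := c) (Or.inl (hw t ht).ne')
    simpa [Function.comp_def] using h2.comp t h1
  have hΨ : ∀ t ∈ Set.Icc (0:ℝ) 1, HasDerivAt Ψ (D t) t := by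
    intro t ht
    have P1 := (hpow (1-α) t ht).div_const (1-α)
    have P0 := hpow (-α) t ht
    have P2 := P0.div_const 2
    have P3 := (hpow (-α-1) t ht).const_mul (α/12)
    have P4 := (hasDerivAt_id t).mul P0
    have poly5 : HasDerivAt (fun u : ℝ => α/2*(u-u^2)) (α/2*(1-2*t)) t := by
      have := ((hasDerivAt_id t).sub (hasDerivAt_pow 2 t)).const_mul (α/2)
      convert this using 1
      · rfl
      · rfl
      · rfl
      push_cast
      ring
    have P5 := poly5.mul (hpow (-α-1) t ht)
    have poly6 : HasDerivAt (fun u : ℝ => α*(α+1)*(u^3/6 - u^2/4 + u/12))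
        (α*(α+1)*(t^2/2 - t/2 + 1/12)) t := by
      have := ((((hasDerivAt_pow 3 t).div_const 6).sub ((hasDerivAt_pow 2 t).div_const 4)).add
        ((hasDerivAt_id t).div_const 12)).const_mul (α*(α+1))
      convert this using 1
      · rfl
      · rfl
      · rfl
      push_cast
      ring
    have P6 := poly6.mul (hpow (-α-2) t ht)
    have H := (((P1.add P2).sub P3).sub P4).add P5 |>.sub P6
    convert H using 1
    · rfl
    · rfl
    · rfl
    rw [hDdef]
    rw [show (1-α-1:ℝ) = -α by ring, show (-α-1-1:ℝ) = -α-2 by ring,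
      show (-α-2-1:ℝ) = -α-3 by ring]
    have h1α : (1-α) ≠ 0 := by linarith
    simp only [id_eq]
    field_simp
    ring
  have hbound : ∀ t ∈ Set.Icc (0:ℝ) 1, ‖D t‖ ≤ 3 * x^(-α-3) := by
    intro t ht
    obtain ⟨ht0, ht1⟩ := ht
    rw [hDdef, Real.norm_eq_abs]
    have hwt : (0:ℝ) < x + t := by linarith
    have h1 : |α*(α+1)*(α+2)| ≤ 6 := by
      rw [_root_.abs_of_nonneg (by positivity : (0:ℝ) ≤ α*(α+1)*(α+2))]
      nlinarith [sq_nonneg α, sq_nonneg (α-1), sq_nonneg (α+1)]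
    have h2 : |t^3/6 - t^2/4 + t/12| ≤ 1/2 := by
      rw [abs_le]
      constructor <;> nlinarith [pow_le_one₀ ht0 ht1 (n := 3), pow_le_one₀ ht0 ht1 (n := 2),
        pow_nonneg ht0 3, pow_nonneg ht0 2]
    have h3 : (x+t)^(-α-3) ≤ x^(-α-3) :=
      rpow_anti (by linarith) (by linarith) (by linarith)
    have h4 : (0:ℝ) ≤ (x+t)^(-α-3) := Real.rpow_nonneg hwt.le _
    calc |α*(α+1)*(α+2)*(t^3/6 - t^2/4 + t/12)*(x+t)^(-α-3)|
        = |α*(α+1)*(α+2)| * |t^3/6 - t^2/4 + t/12| * |(x+t)^(-α-3)| := by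
          rw [abs_mul, abs_mul]
      _ ≤ 6 * (1/2) * x^(-α-3) := by
          apply mul_le_mul (mul_le_mul h1 h2 (abs_nonneg _) (by norm_num)) _
            (abs_nonneg _) (by norm_num)
          rw [_root_.abs_of_nonneg h4]; exact h3
      _ = 3 * x^(-α-3) := by ring
  have key := Convex.norm_image_sub_le_of_norm_hasDerivWithin_le
    (f := Ψ) (f' := D) (s := Set.Icc (0:ℝ) 1) (C := 3 * x^(-α-3))
    (fun t ht => (hΨ t ht).hasDerivWithinAt) hbound (convex_Icc _ _)
    (Set.left_mem_Icc.mpr (by norm_num)) (Set.right_mem_Icc.mpr (by norm_num))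
  have heval : Ψ 1 - Ψ 0
      = ((x+1)^(1-α)/(1-α) + (x+1)^(-α)/2 - (α/12)*(x+1)^(-α-1))
      - (x^(1-α)/(1-α) + x^(-α)/2 - (α/12)*x^(-α-1)) - (x+1)^(-α) := by
    rw [hΨdef]
    norm_num
    ring
  rw [← heval]
  calc |Ψ 1 - Ψ 0| ≤ 3 * x^(-α-3) * ‖(1:ℝ) - 0‖ := key
    _ = 3 * x^(-α-3) := by norm_num

noncomputable def Ffn (α : ℝ) (x : ℝ) : ℝ := x^(1-α)/(1-α) + x^(-α)/2 - (α/12)*x^(-α-1)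

noncomputable def eseq (α : ℝ) (m : ℕ) : ℝ :=
  (∑ k ∈ Icc 1 m, (k:ℝ)^(-α)) - Ffn α m - zetaR α

lemma eseq_tendsto {α : ℝ} (hα0 : 0 < α) (hα1 : α < 1) :
    Tendsto (eseq α) atTop (𝓝 0) := by
  have h1 := (zeta_limit hα0 hα1).sub_const (zetaR α)
  have h2 : Tendsto (fun m : ℕ => (m:ℝ)^(-α)) atTop (𝓝 0) :=
    (tendsto_rpow_neg_atTop hα0).comp tendsto_natCast_atTop_atTop
  have h3 : Tendsto (fun m : ℕ => (m:ℝ)^(-α-1)) atTop (𝓝 0) := by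
    have := (tendsto_rpow_neg_atTop (by linarith : (0:ℝ) < α+1)).comp tendsto_natCast_atTop_atTop
    simp only [show -(α+1) = -α-1 by ring] at this
    exact this
  have T := (h1.sub (h2.div_const 2)).add (h3.const_mul (α/12))
  norm_num at T
  apply T.congr
  intro m
  unfold eseq Ffn
  ring

lemma eseq_step {α : ℝ} (hα0 : 0 < α) (hα1 : α < 1) {m : ℕ} (hm : 1 ≤ m) :
    |eseq α m - eseq α (m+1)| ≤ 3 * (m:ℝ)^(-α-3) := by
  have hm1 : (1:ℝ) ≤ (m:ℝ) := by exact_mod_cast hm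
  have hsum : (∑ k ∈ Icc 1 (m+1), (k:ℝ)^(-α))
      = (∑ k ∈ Icc 1 m, (k:ℝ)^(-α)) + ((m:ℝ)+1)^(-α) := by
    rw [Finset.sum_Icc_succ_top (by omega : 1 ≤ m+1)]
    push_cast
    ring_nf
  have hdiff : eseq α m - eseq α (m+1) = (Ffn α ((m:ℝ)+1) - Ffn α (m:ℝ) - ((m:ℝ)+1)^(-α)) := by
    unfold eseq
    rw [hsum]
    have : ((m+1:ℕ):ℝ) = (m:ℝ)+1 := by push_cast; ring
    rw [this]
    ring
  rw [hdiff]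
  have := stepPsi hα0 hα1 hm1
  unfold Ffn
  convert this using 3 <;> ring

lemma eseq_tail {α : ℝ} (hα0 : 0 < α) (hα1 : α < 1) {m : ℕ} (hm : 1 ≤ m) :
    |eseq α m| ≤ 6 * (m:ℝ)^(-α-2) := by
  have hm0 : (0:ℝ) < (m:ℝ) := by exact_mod_cast hm
  have hm1 : (1:ℝ) ≤ (m:ℝ) := by exact_mod_cast hm
  have key : ∀ M : ℕ, m ≤ M →
      |eseq α m - eseq α M| ≤ 6 * (m:ℝ)^(-α-1) * (1/(m:ℝ) - 1/(M:ℝ)) := by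
    intro M hM'
    induction M, hM' using Nat.le_induction with
    | base => norm_num
    | succ M hM ih =>
      have hM0 : (0:ℝ) < (M:ℝ) := by
        have : (0:ℕ) < M := by omega
        exact_mod_cast this
      have hM1 : (1:ℝ) ≤ (M:ℝ) := by
        have : (1:ℕ) ≤ M := by omega
        exact_mod_cast this
      have hmM : (m:ℝ) ≤ (M:ℝ) := by exact_mod_cast hM
      have step := eseq_step hα0 hα1 (show 1 ≤ M by omega)
      have p1 : (M:ℝ)^(-α-3) = (M:ℝ)^(-α-1) * (1/((M:ℝ)*(M:ℝ))) := by
        rw [show (-α-3:ℝ) = (-α-1) + (-2:ℝ) by ring, Real.rpow_add hM0]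
        congr 1
        rw [show (-2:ℝ) = -(2:ℕ) by norm_num, Real.rpow_neg hM0.le, Real.rpow_natCast]
        rw [one_div]
        congr 1
        ring
      have p2 : (M:ℝ)^(-α-1) ≤ (m:ℝ)^(-α-1) := rpow_anti hm0 hmM (by linarith)
      have p3 : 1/((M:ℝ)*(M:ℝ)) ≤ 2*(1/(M:ℝ) - 1/((M:ℝ)+1)) := by
        rw [div_sub_div _ _ (by positivity) (by positivity),
          show (2:ℝ)*((1*((M:ℝ)+1) - (M:ℝ)*1)/((M:ℝ)*((M:ℝ)+1))) = 2/((M:ℝ)*((M:ℝ)+1)) by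
            field_simp; ring,
          div_le_div_iff₀ (by positivity) (by positivity)]
        nlinarith
      have p4 : 3 * (M:ℝ)^(-α-3) ≤ 6 * (m:ℝ)^(-α-1) * (1/(M:ℝ) - 1/((M:ℝ)+1)) := by
        rw [p1]
        have h5 : (0:ℝ) ≤ (M:ℝ)^(-α-1) := Real.rpow_nonneg hM0.le _
        have h6 : (0:ℝ) ≤ 1/((M:ℝ)*(M:ℝ)) := by positivity
        have h7 : (0:ℝ) ≤ (m:ℝ)^(-α-1) := Real.rpow_nonneg hm0.le _
        calc 3 * ((M:ℝ)^(-α-1) * (1/((M:ℝ)*(M:ℝ))))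
            ≤ 3 * ((m:ℝ)^(-α-1) * (2*(1/(M:ℝ) - 1/((M:ℝ)+1)))) := by
              apply mul_le_mul_of_nonneg_left _ (by norm_num)
              exact mul_le_mul p2 p3 h6 h7
          _ = 6 * (m:ℝ)^(-α-1) * (1/(M:ℝ) - 1/((M:ℝ)+1)) := by ring
      have tri := abs_sub_le (eseq α m) (eseq α M) (eseq α (M+1))
      have hcast : ((M+1:ℕ):ℝ) = (M:ℝ)+1 := by push_cast; ring
      calc |eseq α m - eseq α (M+1)| ≤ |eseq α m - eseq α M| + |eseq α M - eseq α (M+1)| := tri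
        _ ≤ 6 * (m:ℝ)^(-α-1) * (1/(m:ℝ) - 1/(M:ℝ)) + 3 * (M:ℝ)^(-α-3) := add_le_add ih step
        _ ≤ 6 * (m:ℝ)^(-α-1) * (1/(m:ℝ) - 1/(M:ℝ))
            + 6 * (m:ℝ)^(-α-1) * (1/(M:ℝ) - 1/((M:ℝ)+1)) := by linarith
        _ = 6 * (m:ℝ)^(-α-1) * (1/(m:ℝ) - 1/((M:ℝ)+1)) := by ring
        _ = 6 * (m:ℝ)^(-α-1) * (1/(m:ℝ) - 1/(((M+1:ℕ)):ℝ)) := by rw [hcast]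
  have hbound : ∀ᶠ M in atTop, |eseq α m - eseq α M| ≤ 6 * (m:ℝ)^(-α-2) := by
    filter_upwards [eventually_ge_atTop m] with M hM
    have h7 : (0:ℝ) ≤ (m:ℝ)^(-α-1) := Real.rpow_nonneg hm0.le _
    have hM0 : (0:ℝ) ≤ (M:ℝ) := by positivity
    calc |eseq α m - eseq α M| ≤ 6 * (m:ℝ)^(-α-1) * (1/(m:ℝ) - 1/(M:ℝ)) := key M hM
      _ ≤ 6 * (m:ℝ)^(-α-1) * (1/(m:ℝ)) := by
          apply mul_le_mul_of_nonneg_left _ (by positivity)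
          have : (0:ℝ) ≤ 1/(M:ℝ) := by positivity
          linarith
      _ = 6 * (m:ℝ)^(-α-2) := by
          rw [show (-α-2:ℝ) = (-α-1) + (-1:ℝ) by ring, Real.rpow_add hm0,
            Real.rpow_neg_one]
          rw [one_div]
          ring
  have hlim : Tendsto (fun M => |eseq α m - eseq α M|) atTop (𝓝 |eseq α m|) := by
    have := ((tendsto_const_nhds (x := eseq α m)).sub (eseq_tendsto hα0 hα1)).abs
    simpa using this
  exact le_of_tendsto hlim hbound


theorem stmt10 (α : ℝ) (hα0 : 0 < α) (hα1 : α < 1) :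
    ∃ C > 0, ∀ m : ℕ, 0 < m →
      |(∑ k ∈ Finset.Icc 1 m, (k:ℝ) ^ (-α)) - zetaR α - (m:ℝ) ^ (1 - α) / (1 - α)
          - 1 / (2 * (m:ℝ) ^ α) + α / (12 * (m:ℝ) ^ (1 + α))| ≤ C / (m:ℝ) ^ (2 + α) := by
  refine ⟨6, by norm_num, fun m hm => ?_⟩
  have hm0 : (0:ℝ) < (m:ℝ) := by exact_mod_cast hm
  have h1 : (m:ℝ)^(-α) = ((m:ℝ)^α)⁻¹ := Real.rpow_neg hm0.le α
  have h2 : (m:ℝ)^(-α-1) = ((m:ℝ)^(1+α))⁻¹ := by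
    rw [show (-α-1:ℝ) = -(1+α) by ring, Real.rpow_neg hm0.le]
  have h3 : (m:ℝ)^(-α-2) = ((m:ℝ)^(2+α))⁻¹ := by
    rw [show (-α-2:ℝ) = -(2+α) by ring, Real.rpow_neg hm0.le]
  have heq : (∑ k ∈ Finset.Icc 1 m, (k:ℝ) ^ (-α)) - zetaR α - (m:ℝ) ^ (1 - α) / (1 - α)
      - 1 / (2 * (m:ℝ) ^ α) + α / (12 * (m:ℝ) ^ (1 + α)) = eseq α m := by
    unfold eseq Ffn
    rw [h1, h2]
    ring
  rw [heq]
  calc |eseq α m| ≤ 6 * (m:ℝ)^(-α-2) := eseq_tail hα0 hα1 (by omega)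
    _ = 6 / (m:ℝ)^(2+α) := by rw [h3]; ring
end

section
/- Let 0 < α < 1. Then for every positive integer m, 2^α (2m−1)^{−α} − W_m > 1/(2 m^{α}). In particular, the weight σ_m of the order-(2−α) approximation, whose value is σ_m = −2^α (2m−1)^{−α} + W_m, satisfies |σ_m| > 1/(2 m^{α}). -/
open Finset

open Finset Complex Set

namespace Zaux

noncomputable def cterm (n : ℕ) (s : ℂ) : ℂ :=
  ((n:ℂ)+1) ^ (-s) - (((n:ℂ)+1) ^ ((1:ℂ)-s) - (if n = 0 then 0 else (n:ℂ) ^ ((1:ℂ)-s)))/(1-s)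

lemma one_sub_ne {s : ℂ} (hs : s ≠ 1) : (1:ℂ) - s ≠ 0 := by
  intro h; apply hs; linear_combination -h

lemma norm_ofReal_cpow {x : ℝ} (hx : 0 < x) (w : ℂ) : ‖(x:ℂ) ^ w‖ = x ^ w.re := by
  rw [Complex.norm_cpow_eq_rpow_re_of_pos hx]

lemma rpow_anti {a b p : ℝ} (ha : 0 < a) (hab : a ≤ b) (hp : p ≤ 0) : b ^ p ≤ a ^ p := by
  rw [show p = -(-p) by ring, Real.rpow_neg (le_of_lt ha), Real.rpow_neg (by linarith)]
  apply inv_anti₀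
  · exact Real.rpow_pos_of_pos ha _
  · exact Real.rpow_le_rpow (le_of_lt ha) hab (by linarith)

/-- pointwise derivative bound estimate -/
lemma cpow_sub_cpow_bound {s : ℂ} (hσ : 0 < s.re) {n : ℕ} (hn : 1 ≤ n) {x : ℝ}
    (hx : (n:ℝ) ≤ x) (hx2 : x ≤ (n:ℝ)+1) :
    ‖((n:ℝ)+1:ℂ) ^ (-s) - (x:ℂ) ^ (-s)‖ ≤ ‖s‖ * (n:ℝ) ^ (-s.re - 1) := by
  have hn0 : (0:ℝ) < n := by exact_mod_cast hn
  have hx0 : (0:ℝ) < x := lt_of_lt_of_le hn0 hx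
  have hder : ∀ y ∈ Set.Icc x ((n:ℝ)+1),
      HasDerivWithinAt (fun y : ℝ => (y:ℂ) ^ (-s)) ((-s) * (y:ℂ) ^ (-s-1)) (Set.Icc x ((n:ℝ)+1)) y := by
    intro y hy
    have hy0 : (0:ℝ) < y := lt_of_lt_of_le hx0 hy.1
    have h : HasDerivAt (fun z : ℂ => z ^ (-s)) ((-s) * (y:ℂ) ^ (-s-1)) (y:ℂ) :=
      (Complex.hasStrictDerivAt_cpow_const (by
        rw [Complex.mem_slitPlane_iff]; left; simpa using hy0)).hasDerivAt
    exact (h.comp_ofReal).hasDerivWithinAt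
  have hbound : ∀ y ∈ Set.Ico x ((n:ℝ)+1), ‖(-s) * (y:ℂ) ^ (-s-1)‖ ≤ ‖s‖ * (n:ℝ) ^ (-s.re - 1) := by
    intro y hy
    have hy0 : (0:ℝ) < y := lt_of_lt_of_le hx0 hy.1
    rw [norm_mul, norm_neg, norm_ofReal_cpow hy0]
    have : (-s-1).re = -s.re - 1 := by simp
    rw [this]
    have h2 : y ^ (-s.re - 1) ≤ (n:ℝ) ^ (-s.re - 1) :=
      rpow_anti hn0 (le_trans hx hy.1) (by linarith)
    exact mul_le_mul_of_nonneg_left h2 (norm_nonneg s)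
  have := norm_image_sub_le_of_norm_deriv_le_segment' hder hbound ((n:ℝ)+1)
    (Set.right_mem_Icc.mpr (by linarith))
  calc ‖((n:ℝ)+1:ℂ) ^ (-s) - (x:ℂ) ^ (-s)‖
      ≤ (‖s‖ * (n:ℝ) ^ (-s.re - 1)) * (((n:ℝ)+1) - x) := by
        simpa using this
    _ ≤ ‖s‖ * (n:ℝ) ^ (-s.re - 1) := by
        nlinarith [norm_nonneg s, Real.rpow_nonneg (le_of_lt hn0) (-s.re-1),
          mul_nonneg (norm_nonneg s) (Real.rpow_nonneg (le_of_lt hn0) (-s.re-1))]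

lemma cterm_eq_integral {s : ℂ} (hs1 : s ≠ 1) {n : ℕ} (hn : 1 ≤ n) :
    cterm n s = ∫ x in (n:ℝ)..((n:ℝ)+1), (((n:ℝ)+1:ℂ) ^ (-s) - (x:ℂ) ^ (-s)) := by
  have hn0 : (0:ℝ) < n := by exact_mod_cast hn
  have hcont : IntervalIntegrable (fun x : ℝ => (x:ℂ) ^ (-s)) MeasureTheory.volume (n:ℝ) ((n:ℝ)+1) := by
    apply ContinuousOn.intervalIntegrable
    intro x hx
    rw [Set.uIcc_of_le (by linarith)] at hx
    exact (Complex.continuousAt_ofReal_cpow_const x (-s)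
      (Or.inr (by nlinarith [hx.1]))).continuousWithinAt
  have hftc : ∫ x in (n:ℝ)..((n:ℝ)+1), (x:ℂ) ^ (-s)
      = (((n:ℝ)+1:ℂ) ^ ((1:ℂ)-s) - ((n:ℝ):ℂ) ^ ((1:ℂ)-s))/(1-s) := by
    have key : ∀ x ∈ Set.uIcc (n:ℝ) ((n:ℝ)+1),
        HasDerivAt (fun y : ℝ => (y:ℂ) ^ ((1:ℂ)-s)/(1-s)) ((x:ℂ) ^ (-s)) x := by
      intro x hx
      rw [Set.uIcc_of_le (by linarith)] at hx
      have hx0 : x ≠ 0 := by nlinarith [hx.1]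
      have := hasDerivAt_ofReal_cpow_const' hx0 (r := -s) (by
        intro h
        apply hs1
        linear_combination -h)
      have hrw : -s + 1 = (1:ℂ) - s := by ring
      rw [hrw] at this
      exact this
    rw [intervalIntegral.integral_eq_sub_of_hasDerivAt key hcont, sub_div]
    norm_cast
  rw [intervalIntegral.integral_sub (by simp) hcont, intervalIntegral.integral_const]
  rw [hftc, cterm, if_neg (Nat.pos_iff_ne_zero.mp hn)]
  push_cast
  simp
  try ring

lemma cterm_bound {s : ℂ} (hσ : 0 < s.re) (hs1 : s ≠ 1) {n : ℕ} (hn : 1 ≤ n) :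
    ‖cterm n s‖ ≤ ‖s‖ * (n:ℝ) ^ (-s.re - 1) := by
  rw [cterm_eq_integral hs1 hn]
  have := intervalIntegral.norm_integral_le_of_norm_le_const
    (C := ‖s‖ * (n:ℝ) ^ (-s.re - 1)) (a := (n:ℝ)) (b := (n:ℝ)+1)
    (f := fun x => (((n:ℝ)+1:ℂ) ^ (-s) - (x:ℂ) ^ (-s))) ?_
  · simpa using this
  · intro x hx
    rw [Set.uIoc_of_le (by linarith)] at hx
    exact cpow_sub_cpow_bound hσ hn (le_of_lt hx.1) hx.2

lemma sum_cterm {s : ℂ} (hs : s ≠ 1) (N : ℕ) :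
    ∑ n ∈ Finset.range N, cterm n s
      = (∑ n ∈ Finset.range N, ((n:ℂ)+1) ^ (-s)) - (N:ℂ) ^ ((1:ℂ)-s)/(1-s) := by
  induction N with
  | zero => simp [Complex.zero_cpow (one_sub_ne hs)]
  | succ N ih =>
      rw [Finset.sum_range_succ, Finset.sum_range_succ, ih, cterm]
      rcases Nat.eq_zero_or_pos N with h0 | hpos
      · subst h0
        simp [cterm, Complex.zero_cpow (one_sub_ne hs)]
      · rw [if_neg (Nat.pos_iff_ne_zero.mp hpos)]
        push_cast
        ring


end Zaux

namespace Zaux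
open Filter Topology

def UU : Set ℂ := {s | 0 < s.re ∧ s ≠ 1}

lemma isOpen_UU : IsOpen UU := by
  have : UU = (Complex.re ⁻¹' Set.Ioi 0) ∩ {(1:ℂ)}ᶜ := by
    ext s; simp [UU, Set.mem_setOf_eq, and_comm]
  rw [this]
  exact (isOpen_Ioi.preimage Complex.continuous_re).inter isOpen_compl_singleton

noncomputable def G1 (s : ℂ) : ℂ := ∑' n : ℕ, cterm (n+1) s

noncomputable def G (s : ℂ) : ℂ := cterm 0 s + G1 s

lemma re_dist (z w : ℂ) : |z.re - w.re| ≤ dist z w := by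
  rw [Complex.dist_eq]
  simpa using Complex.abs_re_le_norm (z - w)

lemma cterm_differentiableOn (n : ℕ) : DifferentiableOn ℂ (cterm n) UU := by
  intro s hs
  obtain ⟨hσ, hs1⟩ := hs
  apply DifferentiableAt.differentiableWithinAt
  have hne : ((n:ℂ)+1) ≠ 0 := by
    intro h
    have : ((n:ℝ)+1) = 0 := by exact_mod_cast congrArg Complex.re h
    nlinarith [Nat.cast_nonneg (α := ℝ) n]
  have h1 : DifferentiableAt ℂ (fun s : ℂ => ((n:ℂ)+1) ^ (-s)) s :=
    (differentiable_neg.differentiableAt).const_cpow (Or.inl hne)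
  have h2 : DifferentiableAt ℂ (fun s : ℂ => ((n:ℂ)+1) ^ ((1:ℂ)-s)) s :=
    ((differentiable_const (1:ℂ)).sub differentiable_id).differentiableAt.const_cpow (Or.inl hne)
  have h3 : DifferentiableAt ℂ (fun s : ℂ => (if n = 0 then 0 else (n:ℂ) ^ ((1:ℂ)-s))) s := by
    rcases Nat.eq_zero_or_pos n with h0 | hpos
    · simp [h0]
    · simp only [if_neg (Nat.pos_iff_ne_zero.mp hpos)]
      exact ((differentiable_const (1:ℂ)).sub differentiable_id).differentiableAt.const_cpow
        (Or.inl (by exact_mod_cast Nat.cast_ne_zero.mpr (Nat.pos_iff_ne_zero.mp hpos)))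
  exact h1.sub ((h2.sub h3).div ((differentiable_const (1:ℂ)).sub
    differentiable_id).differentiableAt (one_sub_ne hs1))

lemma cterm_bound' {s : ℂ} (hs : s ∈ UU) (n : ℕ) :
    ‖cterm (n+1) s‖ ≤ ‖s‖ * ((n:ℝ)+1) ^ (-s.re - 1) := by
  have := cterm_bound hs.1 hs.2 (n := n+1) (by omega)
  simpa using this

lemma summable_aux {c p : ℝ} (hp : p < -1) : Summable (fun n : ℕ => c * ((n:ℝ)+1) ^ p) := by
  apply Summable.mul_left
  have h := Real.summable_nat_rpow.mpr hp
  have := (summable_nat_add_iff 1).mpr h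
  simpa using this

lemma summable_cterm {s : ℂ} (hs : s ∈ UU) : Summable (fun n : ℕ => cterm (n+1) s) := by
  apply Summable.of_norm_bounded (summable_aux (c := ‖s‖) (p := -s.re - 1) (by linarith [hs.1]))
  exact cterm_bound' hs

lemma G1_differentiableOn : DifferentiableOn ℂ G1 UU := by
  intro s0 hs0
  obtain ⟨hσ0, hs01⟩ := hs0
  set ε : ℝ := min (s0.re/2) (dist s0 1) with hε
  have hd1 : 0 < dist s0 1 := dist_pos.mpr hs01
  have hε0 : 0 < ε := lt_min (by linarith) hd1
  have hball : Metric.ball s0 ε ⊆ UU := by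
    intro s hsb
    rw [Metric.mem_ball] at hsb
    constructor
    · have : |s.re - s0.re| ≤ dist s s0 := re_dist _ _
      have h2 : dist s s0 < s0.re/2 := lt_of_lt_of_le hsb (min_le_left _ _)
      have := abs_lt.mp (lt_of_le_of_lt this h2)
      linarith [this.1]
    · intro h
      subst h
      have : dist s0 1 < dist s0 1 := by
        calc dist s0 1 = dist (1:ℂ) s0 := dist_comm _ _
        _ < ε := hsb
        _ ≤ dist s0 1 := min_le_right _ _
      exact lt_irrefl _ this
  have hdiff : DifferentiableOn ℂ G1 (Metric.ball s0 ε) := by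
    apply differentiableOn_tsum_of_summable_norm
      (u := fun n : ℕ => (‖s0‖ + ε) * ((n:ℝ)+1) ^ (-(s0.re/2) - 1))
      (summable_aux (by linarith)) (fun n => (cterm_differentiableOn (n+1)).mono hball)
      Metric.isOpen_ball
    intro n w hw
    have hwU := hball hw
    have hw2 : w.re ≥ s0.re/2 := by
      rw [Metric.mem_ball] at hw
      have : |w.re - s0.re| ≤ dist w s0 := re_dist _ _
      have h2 : dist w s0 < s0.re/2 := lt_of_lt_of_le hw (min_le_left _ _)
      have := abs_lt.mp (lt_of_le_of_lt this h2)
      linarith [this.1]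
    have hwn : ‖w‖ ≤ ‖s0‖ + ε := by
      rw [Metric.mem_ball] at hw
      have := norm_sub_norm_le w s0
      rw [← dist_eq_norm] at this
      linarith
    calc ‖cterm (n+1) w‖ ≤ ‖w‖ * ((n:ℝ)+1) ^ (-w.re - 1) := cterm_bound' hwU n
      _ ≤ (‖s0‖ + ε) * ((n:ℝ)+1) ^ (-(s0.re/2) - 1) := by
          apply mul_le_mul hwn _ (Real.rpow_nonneg (by positivity) _) (by positivity)
          apply Real.rpow_le_rpow_of_exponent_le (by linarith [Nat.cast_nonneg (α := ℝ) n])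
          linarith
  exact ((hdiff.differentiableAt (Metric.isOpen_ball.mem_nhds
    (Metric.mem_ball_self hε0)))).differentiableWithinAt

lemma G_differentiableOn : DifferentiableOn ℂ G UU :=
  (cterm_differentiableOn 0).add G1_differentiableOn

lemma hasSum_cterm_G {s : ℂ} (hs : s ∈ UU) : HasSum (fun n => cterm n s) (G s) := by
  have h1 : HasSum (fun n => cterm (n+1) s) (G1 s) := (summable_cterm hs).hasSum
  exact (hasSum_nat_add_iff' (g := G s) 1).mp (by simpa [G] using h1)

end Zaux

namespace Zaux
open Filter Topology

lemma G_eq_zeta : Set.EqOn G riemannZeta {s : ℂ | 1 < s.re} := by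
  intro s hs
  have hσ : 1 < s.re := hs
  have hs1 : s ≠ 1 := by
    intro h; rw [h] at hσ; simp at hσ
  have hsU : s ∈ UU := ⟨by linarith, hs1⟩
  -- limit 1 : partial sums of cterm tend to G s
  have hlim1 : Tendsto (fun N => ∑ n ∈ Finset.range N, cterm n s) atTop (𝓝 (G s)) :=
    (hasSum_cterm_G hsU).tendsto_sum_nat
  -- limit 2 : they also tend to ζ s
  have hsummable : Summable (fun n : ℕ => ((n:ℂ)+1) ^ (-s)) := by
    have h : Summable (fun n : ℕ => 1 / ((n:ℂ)+1) ^ s) := by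
      have := (summable_one_div_nat_cpow (p := s)).mpr hσ
      have h2 := (summable_nat_add_iff (f := fun n : ℕ => 1 / (n:ℂ) ^ s) 1).mpr this
      simpa using h2
    apply h.congr
    intro n
    rw [Complex.cpow_neg, one_div]
  have hzeta : ∑' n : ℕ, ((n:ℂ)+1) ^ (-s) = riemannZeta s := by
    rw [zeta_eq_tsum_one_div_nat_add_one_cpow hσ]
    apply tsum_congr
    intro n
    rw [Complex.cpow_neg, one_div]
  have hlim2a : Tendsto (fun N => ∑ n ∈ Finset.range N, ((n:ℂ)+1) ^ (-s)) atTop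
      (𝓝 (riemannZeta s)) := by
    have := hsummable.hasSum.tendsto_sum_nat
    rwa [hzeta] at this
  have hlim2b : Tendsto (fun N : ℕ => (N:ℂ) ^ ((1:ℂ)-s)/(1-s)) atTop (𝓝 0) := by
    rw [show (0:ℂ) = 0/(1-s) by simp]
    apply Tendsto.div_const
    rw [tendsto_zero_iff_norm_tendsto_zero]
    have hre : (1:ℝ) - s.re < 0 := by linarith
    have hmain : Tendsto (fun N : ℕ => (N:ℝ) ^ ((1:ℝ) - s.re)) atTop (𝓝 0) := by
      have := (tendsto_rpow_neg_atTop (y := s.re - 1) (by linarith)).comp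
        tendsto_natCast_atTop_atTop
      refine this.congr fun N => ?_
      simp only [Function.comp]
      norm_num
    apply hmain.congr'
    filter_upwards [eventually_gt_atTop 0] with N hN
    have hN0 : (0:ℝ) < N := by exact_mod_cast hN
    rw [show ((N:ℕ):ℂ) = ((N:ℝ):ℂ) by norm_num, norm_ofReal_cpow hN0]
    norm_num
  have hlim2 : Tendsto (fun N => ∑ n ∈ Finset.range N, cterm n s) atTop (𝓝 (riemannZeta s)) := by
    have := hlim2a.sub hlim2b
    rw [sub_zero] at this
    apply this.congr
    intro N
    rw [sum_cterm hs1]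
  exact tendsto_nhds_unique hlim1 hlim2

lemma zeta_analyticOn : AnalyticOnNhd ℂ riemannZeta UU := by
  apply DifferentiableOn.analyticOnNhd _ isOpen_UU
  exact fun s hs => (differentiableAt_riemannZeta hs.2).differentiableWithinAt

lemma G_eq_zeta_on_UU_strip : ∀ s : ℂ, 0 < s.re → s.re < 1 → G s = riemannZeta s := by
  -- step 1 : equality on C2 = {0 < re, 0 < im}
  set C2 : Set ℂ := {s | 0 < s.re ∧ 0 < s.im} with hC2
  have hC2conv : Convex ℝ C2 := (convex_halfSpace_re_gt 0).inter (convex_halfSpace_im_gt 0)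
  have hC2open : IsOpen C2 :=
    ((isOpen_Ioi.preimage Complex.continuous_re).inter (isOpen_Ioi.preimage Complex.continuous_im))
  have hC2U : C2 ⊆ UU := by
    intro s hs
    exact ⟨hs.1, by intro h; rw [h] at hs; simpa using hs.2⟩
  have hGan : AnalyticOnNhd ℂ G UU := G_differentiableOn.analyticOnNhd isOpen_UU
  have hz0 : (2 + Complex.I) ∈ C2 := by constructor <;> norm_num [Complex.add_re, Complex.add_im]
  have heq2 : Set.EqOn G riemannZeta C2 := by
    apply AnalyticOnNhd.eqOn_of_preconnected_of_eventuallyEq (hGan.mono hC2U)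
      (zeta_analyticOn.mono hC2U) hC2conv.isPreconnected hz0
    have hopen : IsOpen {s : ℂ | 1 < s.re} := isOpen_Ioi.preimage Complex.continuous_re
    have hmem : {s : ℂ | 1 < s.re} ∈ 𝓝 (2 + Complex.I) := hopen.mem_nhds
      (by norm_num [Set.mem_setOf_eq, Complex.add_re])
    exact Filter.eventuallyEq_of_mem hmem G_eq_zeta
  -- step 2 : equality on C3 = {0 < re < 1}
  set C3 : Set ℂ := {s | 0 < s.re ∧ s.re < 1} with hC3
  have hC3conv : Convex ℝ C3 := (convex_halfSpace_re_gt 0).inter (convex_halfSpace_re_lt 1)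
  have hC3U : C3 ⊆ UU := by
    intro s hs
    refine ⟨hs.1, ?_⟩
    intro h; rw [h] at hs
    exact absurd hs.2 (by norm_num)
  have hz1 : ((1/2 : ℂ) + Complex.I) ∈ C3 := by constructor <;> norm_num [Complex.add_re, Complex.add_im]
  have heq3 : Set.EqOn G riemannZeta C3 := by
    apply AnalyticOnNhd.eqOn_of_preconnected_of_eventuallyEq (hGan.mono hC3U)
      (zeta_analyticOn.mono hC3U) hC3conv.isPreconnected hz1
    have hopen : IsOpen C2 := hC2open
    have hmem : C2 ∈ 𝓝 ((1/2 : ℂ) + Complex.I) := hopen.mem_nhds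
      (by constructor <;> norm_num [Complex.add_re, Complex.add_im])
    exact Filter.eventuallyEq_of_mem hmem heq2
  intro s h1 h2
  exact heq3 ⟨h1, h2⟩

end Zaux

namespace Zaux
open Filter Topology Real

variable {α : ℝ}

noncomputable def rterm (α : ℝ) (n : ℕ) : ℝ :=
  ((n:ℝ)+1) ^ (-α) - (((n:ℝ)+1) ^ (1-α) - (n:ℝ) ^ (1-α))/(1-α)

lemma rterm_cast (hα1 : α < 1) (n : ℕ) : ((rterm α n : ℝ) : ℂ) = cterm n (α:ℂ) := by
  have hne : (1:ℝ) - α ≠ 0 := by linarith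
  rcases Nat.eq_zero_or_pos n with h0 | hpos
  · subst h0
    simp only [rterm, cterm, Nat.cast_zero, if_pos rfl, zero_add]
    rw [Real.zero_rpow hne, Real.one_rpow, Real.one_rpow, Complex.one_cpow, Complex.one_cpow]
    push_cast
    ring
  · have hn0 : (n:ℝ) > 0 := by exact_mod_cast hpos
    rw [rterm, cterm, if_neg (Nat.pos_iff_ne_zero.mp hpos)]
    have e1 : (((((n:ℝ)+1) ^ (-α) : ℝ)) : ℂ) = ((n:ℂ)+1) ^ (-(α:ℂ)) := by
      rw [Complex.ofReal_cpow (by positivity)]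
      push_cast
      norm_num
    have e2 : (((((n:ℝ)+1) ^ (1-α) : ℝ)) : ℂ) = ((n:ℂ)+1) ^ ((1:ℂ)-(α:ℂ)) := by
      rw [Complex.ofReal_cpow (by positivity)]
      push_cast
      norm_num
    have e3 : ((((n:ℝ) ^ (1-α) : ℝ)) : ℂ) = (n:ℂ) ^ ((1:ℂ)-(α:ℂ)) := by
      rw [Complex.ofReal_cpow (by positivity)]
      push_cast
      norm_num
    push_cast [← e1, ← e2, ← e3]
    ring

lemma alpha_mem_UU (hα0 : 0 < α) (hα1 : α < 1) : (α:ℂ) ∈ UU := by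
  constructor
  · simpa using hα0
  · intro h
    have := congrArg Complex.re h
    simp at this
    linarith

lemma hasSum_rterm (hα0 : 0 < α) (hα1 : α < 1) : HasSum (rterm α) (_root_.zetaR α) := by
  have hU := alpha_mem_UU hα0 hα1
  have h := hasSum_cterm_G hU
  rw [G_eq_zeta_on_UU_strip _ (by simpa using hα0) (by simpa using hα1)] at h
  have h2 := Complex.hasSum_re h
  have : (fun n => (cterm n (α:ℂ)).re) = rterm α := by
    funext n
    rw [← rterm_cast hα1 n, Complex.ofReal_re]
  rwa [this] at h2

noncomputable def HH (α : ℝ) (N : ℕ) : ℝ := ∑ n ∈ Finset.range N, ((n:ℝ)+1) ^ (-α)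
noncomputable def gg (α : ℝ) (N : ℕ) : ℝ := (N:ℝ) ^ (1-α)/(1-α)

lemma sum_rterm (hα1 : α < 1) (N : ℕ) :
    ∑ n ∈ Finset.range N, rterm α n = HH α N - gg α N := by
  have hne : (1:ℝ) - α ≠ 0 := by linarith
  rw [HH, gg]
  simp only [rterm]
  rw [Finset.sum_sub_distrib]
  congr 1
  rw [← Finset.sum_div]
  have : ∑ n ∈ Finset.range N, (((n:ℝ)+1) ^ (1-α) - (n:ℝ) ^ (1-α))
      = (N:ℝ) ^ (1-α) := by
    have := Finset.sum_range_sub (fun n : ℕ => (n:ℝ) ^ (1-α)) N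
    simp only [Nat.cast_add, Nat.cast_one] at this
    rw [this, Nat.cast_zero, Real.zero_rpow hne, sub_zero]
  rw [this]

noncomputable def rr (α : ℝ) (N : ℕ) : ℝ := HH α N - gg α N - _root_.zetaR α

lemma rr_eq_tsum (hα0 : 0 < α) (hα1 : α < 1) (N : ℕ) :
    rr α N = ∑' n : ℕ, (-(rterm α (n+N))) := by
  have hs := hasSum_rterm hα0 hα1
  have h := Summable.sum_add_tsum_nat_add (f := rterm α) N hs.summable
  rw [hs.tsum_eq, sum_rterm hα1] at h
  rw [tsum_neg]
  rw [rr]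
  linarith [h]

end Zaux

namespace Zaux
open Filter Topology Real Set

variable {α : ℝ}

lemma rterm_nonpos (hα0 : 0 < α) (hα1 : α < 1) (n : ℕ) : rterm α n ≤ 0 := by
  have hne : (1:ℝ) - α ≠ 0 := by linarith
  rcases Nat.eq_zero_or_pos n with h0 | hpos
  · subst h0
    simp only [rterm, Nat.cast_zero, zero_add]
    rw [Real.zero_rpow hne, Real.one_rpow, Real.one_rpow]
    have h1 : 1 ≤ 1/(1-α) := by
      rw [le_div_iff₀ (by linarith)]
      linarith
    have : ((1:ℝ) - 0)/(1-α) = 1/(1-α) := by norm_num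
    rw [this]
    linarith
  · have hn1 : (1:ℝ) ≤ (n:ℝ) := by exact_mod_cast hpos
    set a : ℝ := (n:ℝ) with ha
    have hlt : a < a + 1 := by linarith
    have hcont : ContinuousOn (fun x : ℝ => x ^ (1-α)/(1-α)) (Set.Icc a (a+1)) := by
      intro x hx
      have hx0 : x ≠ 0 := by nlinarith [hx.1]
      exact (((Real.hasDerivAt_rpow_const (p := 1-α) (Or.inl hx0)).differentiableAt.div_const
        _).continuousAt).continuousWithinAt
    have hder : ∀ x ∈ Set.Ioo a (a+1),
        HasDerivAt (fun x : ℝ => x ^ (1-α)/(1-α)) (x ^ (-α)) x := by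
      intro x hx
      have hx0 : x ≠ 0 := by nlinarith [hx.1]
      have h := (Real.hasDerivAt_rpow_const (p := 1-α) (Or.inl hx0)).div_const (1-α)
      have he : (1:ℝ) - α - 1 = -α := by ring
      rw [he] at h
      have hv : (1-α) * x ^ (-α) / (1-α) = x ^ (-α) := by
        field_simp
      rwa [hv] at h
    obtain ⟨c, hc, hceq⟩ := exists_hasDerivAt_eq_slope _ _ hlt hcont hder
    have hc0 : 0 < c := by nlinarith [hc.1]
    have hslope : c ^ (-α) = (a+1) ^ (1-α)/(1-α) - a ^ (1-α)/(1-α) := by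
      rw [hceq]
      norm_num
    have hmono : (a+1) ^ (-α) ≤ c ^ (-α) :=
      rpow_anti hc0 (le_of_lt hc.2) (by linarith)
    simp only [rterm, ← ha]
    rw [sub_div]
    linarith [hmono, hslope]

lemma convexOn_neg_rpow (hα0 : 0 < α) :
    ConvexOn ℝ (Set.Ici (1:ℝ)) (fun x : ℝ => x ^ (-α)) := by
  have hderiv : ∀ x ∈ Set.Ioi (1:ℝ), deriv (fun x : ℝ => x ^ (-α)) x = -α * x ^ (-α-1) := by
    intro x hx
    exact Real.deriv_rpow_const x (-α)
  apply convexOn_of_deriv2_nonneg (convex_Ici 1)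
  · intro x hx
    have hx0 : x ≠ 0 := by
      have : (1:ℝ) ≤ x := hx
      linarith
    exact (Real.continuousAt_rpow_const x _ (Or.inl hx0)).continuousWithinAt
  · rw [interior_Ici]
    intro x hx
    have hx0 : x ≠ 0 := ne_of_gt (lt_trans one_pos hx)
    exact (Real.hasDerivAt_rpow_const (Or.inl hx0)).differentiableAt.differentiableWithinAt
  · rw [interior_Ici]
    refine DifferentiableOn.congr ?_ hderiv
    intro x hx
    have hx0 : x ≠ 0 := ne_of_gt (lt_trans one_pos hx)
    exact ((Real.hasDerivAt_rpow_const (Or.inl hx0)).differentiableAt.const_mul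
      (-α)).differentiableWithinAt
  · rw [interior_Ici]
    intro x hx
    have hx0 : x ≠ 0 := ne_of_gt (lt_trans one_pos hx)
    have heq : deriv (fun x : ℝ => x ^ (-α)) =ᶠ[𝓝 x] (fun x : ℝ => -α * x ^ (-α-1)) :=
      Filter.eventuallyEq_of_mem (isOpen_Ioi.mem_nhds hx) hderiv
    have h2 : deriv^[2] (fun x : ℝ => x ^ (-α)) x
        = deriv (deriv (fun x : ℝ => x ^ (-α))) x := by
      simp [Function.iterate_succ, Function.iterate_one]
    rw [h2, heq.deriv_eq]
    have h3 : HasDerivAt (fun x : ℝ => -α * x ^ (-α-1)) (-α * ((-α-1) * x ^ (-α-1-1))) x :=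
      (Real.hasDerivAt_rpow_const (Or.inl hx0)).const_mul (-α)
    rw [h3.deriv]
    have hx1 : (0:ℝ) < x := lt_trans one_pos hx
    have hrw : -α * ((-α-1) * x ^ (-α-1-1)) = α * (α+1) * x ^ (-α-1-1) := by ring
    rw [hrw]
    positivity

lemma chord_bound (hα0 : 0 < α) {a x : ℝ} (ha : 1 ≤ a) (hx : x ∈ Set.Icc a (a+1)) :
    x ^ (-α) ≤ (a+1-x) * a ^ (-α) + (x-a) * (a+1) ^ (-α) := by
  have hconv := convexOn_neg_rpow hα0
  have h := hconv.2 (show a ∈ Set.Ici (1:ℝ) from ha)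
    (show a+1 ∈ Set.Ici (1:ℝ) by simp only [Set.mem_Ici]; linarith)
    (sub_nonneg.mpr hx.2) (sub_nonneg.mpr hx.1) (by ring)
  have hpt : (a+1-x) • a + (x-a) • (a+1) = x := by
    simp only [smul_eq_mul]; ring
  rw [hpt] at h
  simpa [smul_eq_mul] using h

lemma rterm_lower (hα0 : 0 < α) (hα1 : α < 1) {n : ℕ} (hn : 1 ≤ n) :
    -rterm α n ≤ ((n:ℝ) ^ (-α) - ((n:ℝ)+1) ^ (-α))/2 := by
  set a : ℝ := (n:ℝ) with ha
  have ha1 : (1:ℝ) ≤ a := by rw [ha]; exact_mod_cast hn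
  have key : ((a+1) ^ (1-α) - a ^ (1-α))/(1-α) ≤ (a ^ (-α) + (a+1) ^ (-α))/2 := by
    have hInt : ∫ x in a..(a+1), x ^ (-α)
        = ((a+1) ^ (1-α) - a ^ (1-α))/(1-α) := by
      rw [integral_rpow (Or.inl (by linarith))]
      rw [show -α + 1 = 1 - α by ring]
    have hIntg : ∫ x in a..(a+1), ((a+1-x) * a ^ (-α) + (x-a) * (a+1) ^ (-α))
        = (a ^ (-α) + (a+1) ^ (-α))/2 := by
      have h1 : ∀ x : ℝ, (a+1-x) * a ^ (-α) + (x-a) * (a+1) ^ (-α)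
          = ((a+1) * a ^ (-α) - a * (a+1) ^ (-α)) + ((a+1) ^ (-α) - a ^ (-α)) * x := by
        intro x; ring
      simp_rw [h1]
      rw [intervalIntegral.integral_add (g := fun x => ((a+1) ^ (-α) - a ^ (-α)) * x) (intervalIntegrable_const)
        ((continuous_const.mul continuous_id').intervalIntegrable _ _),
        intervalIntegral.integral_const, intervalIntegral.integral_const_mul,
        integral_id]
      simp only [smul_eq_mul, id]
      ring
    have hmono : ∫ x in a..(a+1), x ^ (-α)
        ≤ ∫ x in a..(a+1), ((a+1-x) * a ^ (-α) + (x-a) * (a+1) ^ (-α)) := by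
      apply intervalIntegral.integral_mono_on (by linarith)
      · apply ContinuousOn.intervalIntegrable
        intro x hx
        rw [Set.uIcc_of_le (by linarith)] at hx
        have hx0 : x ≠ 0 := by nlinarith [hx.1]
        exact (Real.continuousAt_rpow_const x _ (Or.inl hx0)).continuousWithinAt
      · exact (((continuous_const.sub continuous_id).mul continuous_const).add
          ((continuous_id.sub continuous_const).mul continuous_const)).intervalIntegrable _ _
      · intro x hx
        exact chord_bound hα0 ha1 hx
    rw [hInt, hIntg] at hmono
    exact hmono
  simp only [rterm, ← ha]
  rw [sub_div] at key ⊢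
  linarith [key]

end Zaux

namespace Zaux
open Filter Topology Real Set

variable {α : ℝ}

lemma rpow_anti_strict {a b p : ℝ} (ha : 0 < a) (hab : a < b) (hp : 0 < p) :
    b ^ (-p) < a ^ (-p) := by
  rw [Real.rpow_neg (le_of_lt ha), Real.rpow_neg (by linarith)]
  have h := Real.rpow_lt_rpow (le_of_lt ha) hab hp
  exact inv_strictAnti₀ (Real.rpow_pos_of_pos ha p) h

lemma hasSum_tele (hα0 : 0 < α) {N : ℕ} (hN : 1 ≤ N) :
    HasSum (fun n : ℕ => ((n:ℝ)+(N:ℝ)) ^ (-α)/2 - (((n:ℝ)+1)+(N:ℝ)) ^ (-α)/2)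
      ((N:ℝ) ^ (-α)/2) := by
  have hN0 : (0:ℝ) < N := by exact_mod_cast hN
  have hnonneg : ∀ n : ℕ, 0 ≤ ((n:ℝ)+(N:ℝ)) ^ (-α)/2 - (((n:ℝ)+1)+(N:ℝ)) ^ (-α)/2 := by
    intro n
    have := rpow_anti (a := (n:ℝ)+(N:ℝ)) (b := ((n:ℝ)+1)+(N:ℝ)) (p := -α)
      (by positivity) (by linarith) (by linarith)
    linarith
  rw [hasSum_iff_tendsto_nat_of_nonneg hnonneg]
  have hps : ∀ K : ℕ, ∑ n ∈ Finset.range K,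
      (((n:ℝ)+(N:ℝ)) ^ (-α)/2 - (((n:ℝ)+1)+(N:ℝ)) ^ (-α)/2)
      = (N:ℝ) ^ (-α)/2 - ((K:ℝ)+(N:ℝ)) ^ (-α)/2 := by
    intro K
    have h := Finset.sum_range_sub' (fun n : ℕ => ((n:ℝ)+(N:ℝ)) ^ (-α)/2) K
    push_cast at h
    rw [h]
    norm_num
  have hlim : Tendsto (fun K : ℕ => ((K:ℝ)+(N:ℝ)) ^ (-α)/2) atTop (𝓝 0) := by
    rw [show (0:ℝ) = 0/2 by norm_num]
    apply Tendsto.div_const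
    exact (tendsto_rpow_neg_atTop hα0).comp
      (tendsto_atTop_add_const_right atTop _ tendsto_natCast_atTop_atTop)
  have := (tendsto_const_nhds (x := ((N:ℝ)) ^ (-α)/2)).sub hlim
  rw [sub_zero] at this
  have hgoal := this.congr (fun K => (hps K).symm)
  simpa using hgoal

lemma rr_nonneg (hα0 : 0 < α) (hα1 : α < 1) (N : ℕ) : 0 ≤ rr α N := by
  rw [rr_eq_tsum hα0 hα1]
  exact tsum_nonneg (fun n => neg_nonneg.mpr (rterm_nonpos hα0 hα1 _))

lemma rr_le (hα0 : 0 < α) (hα1 : α < 1) {N : ℕ} (hN : 1 ≤ N) :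
    rr α N ≤ (N:ℝ) ^ (-α)/2 := by
  rw [rr_eq_tsum hα0 hα1]
  have hs := hasSum_rterm hα0 hα1
  have hsum1 : Summable (fun n : ℕ => -(rterm α (n+N))) :=
    ((summable_nat_add_iff N).mpr hs.summable).neg
  have htele := hasSum_tele hα0 hN
  have hle : ∀ n : ℕ, -(rterm α (n+N))
      ≤ ((n:ℝ)+(N:ℝ)) ^ (-α)/2 - (((n:ℝ)+1)+(N:ℝ)) ^ (-α)/2 := by
    intro n
    have h := rterm_lower hα0 hα1 (n := n+N) (by omega)
    have hc : ((n+N:ℕ):ℝ) = (n:ℝ)+(N:ℝ) := by push_cast; ring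
    rw [hc] at h
    calc -(rterm α (n+N)) ≤ (((n:ℝ)+(N:ℝ)) ^ (-α) - (((n:ℝ)+(N:ℝ))+1) ^ (-α))/2 := h
      _ = ((n:ℝ)+(N:ℝ)) ^ (-α)/2 - (((n:ℝ)+1)+(N:ℝ)) ^ (-α)/2 := by
          rw [show ((n:ℝ)+(N:ℝ))+1 = ((n:ℝ)+1)+(N:ℝ) by ring]; ring
  calc ∑' n : ℕ, -(rterm α (n+N))
      ≤ ∑' n : ℕ, (((n:ℝ)+(N:ℝ)) ^ (-α)/2 - (((n:ℝ)+1)+(N:ℝ)) ^ (-α)/2) :=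
        Summable.tsum_le_tsum hle hsum1 htele.summable
    _ = (N:ℝ) ^ (-α)/2 := htele.tsum_eq

lemma HH_succ (N : ℕ) : HH α (N+1) = HH α N + ((N:ℝ)+1) ^ (-α) :=
  Finset.sum_range_succ _ _

lemma HH_double (hα0 : 0 < α) (m : ℕ) :
    ∑ k ∈ Finset.Icc 1 m, (2 * (k:ℝ) - 1) ^ (-α) = HH α (2*m) - 2 ^ (-α) * HH α m := by
  induction m with
  | zero => simp [HH]
  | succ m ih =>
      rw [Finset.sum_Icc_succ_top (by omega), ih]
      rw [show 2*(m+1) = (2*m+1)+1 by ring, HH_succ, HH_succ, HH_succ]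
      have e1 : (2 * ((m:ℝ)+1) - 1) = ((2*m:ℕ):ℝ)+1 := by push_cast; ring
      have e2 : (((2*m+1:ℕ)):ℝ)+1 = 2 * ((m:ℝ)+1) := by push_cast; ring
      have e3 : (2 * ((m:ℝ)+1)) ^ (-α) = 2 ^ (-α) * ((m:ℝ)+1) ^ (-α) :=
        Real.mul_rpow (by norm_num) (by positivity)
      push_cast at e1 e2 ⊢
      rw [e1, e2, e3]
      ring

lemma Wn_eq (hα0 : 0 < α) (hα1 : α < 1) (m : ℕ) :
    Wn α m = 2 ^ α * rr α (2*m) - rr α m := by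
  have hne : (1:ℝ) - α ≠ 0 := by linarith
  have f1 : (2:ℝ) ^ α * (2:ℝ) ^ (-α) = 1 := by
    rw [← Real.rpow_add (by norm_num)]
    norm_num
  have f2 : (2:ℝ) ^ α * ((2*(m:ℝ))) ^ (1-α) = 2 * (m:ℝ) ^ (1-α) := by
    rw [Real.mul_rpow (by norm_num) (Nat.cast_nonneg m), ← mul_assoc,
      ← Real.rpow_add (by norm_num)]
    norm_num
  rw [Wn, HH_double hα0, rr, rr, gg, gg]
  push_cast
  linear_combination (-(HH α m)) * f1 + (1/(1-α)) * f2

end Zaux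


theorem stmt11 (α : ℝ) (hα0 : 0 < α) (hα1 : α < 1) (m : ℕ) (hm : 0 < m) :
    (2:ℝ) ^ α * (2 * (m:ℝ) - 1) ^ (-α) - Wn α m > 1 / (2 * (m:ℝ) ^ α) ∧
    |-((2:ℝ) ^ α) * (2 * (m:ℝ) - 1) ^ (-α) + Wn α m| > 1 / (2 * (m:ℝ) ^ α) := by
  have hm1 : (1:ℝ) ≤ (m:ℝ) := by exact_mod_cast hm
  have hmpos : (0:ℝ) < (m:ℝ) := by linarith
  have h2a : (0:ℝ) < (2:ℝ) ^ α := Real.rpow_pos_of_pos (by norm_num) α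
  have hrr2 := Zaux.rr_le hα0 hα1 (N := 2*m) (by omega)
  have hrr1 := Zaux.rr_nonneg hα0 hα1 m
  have hW := Zaux.Wn_eq hα0 hα1 m
  -- 2^α * (2m)^(-α) = m^(-α)
  have hkey : (2:ℝ) ^ α * (2*(m:ℝ)) ^ (-α) = (m:ℝ) ^ (-α) := by
    rw [Real.mul_rpow (by norm_num) (le_of_lt hmpos), ← mul_assoc,
      ← Real.rpow_add (by norm_num)]
    norm_num
  have hcast : ((2*m:ℕ):ℝ) = 2*(m:ℝ) := by push_cast; ring
  have hWle : Wn α m ≤ (m:ℝ) ^ (-α)/2 := by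
    rw [hW]
    have : (2:ℝ) ^ α * Zaux.rr α (2*m) ≤ (2:ℝ) ^ α * ((2*(m:ℝ)) ^ (-α)/2) := by
      apply mul_le_mul_of_nonneg_left _ (le_of_lt h2a)
      rw [← hcast]
      exact hrr2
    calc (2:ℝ) ^ α * Zaux.rr α (2*m) - Zaux.rr α m ≤ (2:ℝ) ^ α * ((2*(m:ℝ)) ^ (-α)/2) - 0 := by
          linarith
      _ = (m:ℝ) ^ (-α)/2 := by rw [sub_zero, mul_div_assoc'] ; rw [hkey]
  have hA : (m:ℝ) ^ (-α) < (2:ℝ) ^ α * (2 * (m:ℝ) - 1) ^ (-α) := by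
    have hstrict : (2*(m:ℝ)) ^ (-α) < (2*(m:ℝ)-1) ^ (-α) :=
      Zaux.rpow_anti_strict (by linarith) (by linarith) hα0
    calc (m:ℝ) ^ (-α) = (2:ℝ) ^ α * (2*(m:ℝ)) ^ (-α) := hkey.symm
      _ < (2:ℝ) ^ α * (2 * (m:ℝ) - 1) ^ (-α) := by
          exact mul_lt_mul_of_pos_left hstrict h2a
  have hRHS : 1 / (2 * (m:ℝ) ^ α) = (m:ℝ) ^ (-α)/2 := by
    rw [Real.rpow_neg (le_of_lt hmpos)]
    field_simp
  have hfirst : (2:ℝ) ^ α * (2 * (m:ℝ) - 1) ^ (-α) - Wn α m > 1 / (2 * (m:ℝ) ^ α) := by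
    rw [hRHS]
    linarith
  refine ⟨hfirst, ?_⟩
  have hpos : (0:ℝ) < 1 / (2 * (m:ℝ) ^ α) := by positivity
  rw [show -((2:ℝ) ^ α) * (2 * (m:ℝ) - 1) ^ (-α) + Wn α m
    = -((2:ℝ) ^ α * (2 * (m:ℝ) - 1) ^ (-α) - Wn α m) by ring, abs_neg,
    abs_of_pos (by linarith)]
  exact hfirst
end

section
/- Let 0 < α < 1. There is a constant C > 0 such that for every integer k ≥ 2, |(k+1)^{1−α} − 2k^{1−α} + (k−1)^{1−α} − α(α−1)/k^{1+α}| ≤ C / k^{2+α}. -/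
open Set

/-- If `u 0 = 0`, `u' 0 = 0` and `u'' ≤ 0` on `[0,1]`, then `u 1 ≤ 0`. -/
lemma aux_nonpos (u u' u'' : ℝ → ℝ)
    (hu : ∀ t ∈ Icc (0:ℝ) 1, HasDerivAt u (u' t) t)
    (hu' : ∀ t ∈ Icc (0:ℝ) 1, HasDerivAt u' (u'' t) t)
    (h0 : u 0 = 0) (h0' : u' 0 = 0)
    (h2 : ∀ t ∈ Icc (0:ℝ) 1, u'' t ≤ 0) : u 1 ≤ 0 := by
  have hint : interior (Icc (0:ℝ) 1) ⊆ Icc (0:ℝ) 1 := interior_subset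
  have hu'ant : AntitoneOn u' (Icc (0:ℝ) 1) := by
    apply antitoneOn_of_deriv_nonpos (convex_Icc 0 1)
    · exact fun t ht => (hu' t ht).continuousAt.continuousWithinAt
    · exact fun t ht => ((hu' t (hint ht)).differentiableAt).differentiableWithinAt
    · intro t ht
      rw [(hu' t (hint ht)).deriv]
      exact h2 t (hint ht)
  have hu'le : ∀ t ∈ Icc (0:ℝ) 1, u' t ≤ 0 := by
    intro t ht
    have := hu'ant (left_mem_Icc.mpr zero_le_one) ht ht.1
    simpa [h0'] using this
  have huant : AntitoneOn u (Icc (0:ℝ) 1) := by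
    apply antitoneOn_of_deriv_nonpos (convex_Icc 0 1)
    · exact fun t ht => (hu t ht).continuousAt.continuousWithinAt
    · exact fun t ht => ((hu t (hint ht)).differentiableAt).differentiableWithinAt
    · intro t ht
      rw [(hu t (hint ht)).deriv]
      exact hu'le t (hint ht)
  have := huant (left_mem_Icc.mpr zero_le_one) (right_mem_Icc.mpr zero_le_one) zero_le_one
  simpa [h0] using this

/-- One-sided estimate for the second difference, with sign `ε`, `|ε| = 1`. -/
lemma second_diff_side (g g' g'' : ℝ → ℝ) (a B L ε : ℝ) (hL : 0 ≤ L) (hε : |ε| = 1)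
    (hg : ∀ x ∈ Icc (a-1) (a+1), HasDerivAt g (g' x) x)
    (hg' : ∀ x ∈ Icc (a-1) (a+1), HasDerivAt g' (g'' x) x)
    (hlip : ∀ x ∈ Icc (a-1) (a+1), |g'' x - B| ≤ L * |x - a|) :
    ε * (g (a+1) - 2 * g a + g (a-1) - B) ≤ L := by
  set u : ℝ → ℝ := fun t => ε * (g (a+t) - 2 * g a + g (a-t) - t^2 * B) - L * t^3 with hu_def
  set u' : ℝ → ℝ := fun t => ε * (g' (a+t) - g' (a-t) - 2*t*B) - L * (3*t^2) with hu'_def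
  set u'' : ℝ → ℝ := fun t => ε * (g'' (a+t) + g'' (a-t) - 2*B) - L * (6*t) with hu''_def
  have hmemp : ∀ t ∈ Icc (0:ℝ) 1, a + t ∈ Icc (a-1) (a+1) := by
    intro t ht
    obtain ⟨h1, h2⟩ := ht
    exact ⟨by linarith, by linarith⟩
  have hmemm : ∀ t ∈ Icc (0:ℝ) 1, a - t ∈ Icc (a-1) (a+1) := by
    intro t ht
    obtain ⟨h1, h2⟩ := ht
    exact ⟨by linarith, by linarith⟩
  have hu : ∀ t ∈ Icc (0:ℝ) 1, HasDerivAt u (u' t) t := by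
    intro t ht
    have h1 : HasDerivAt (fun t : ℝ => g (a+t)) (g' (a+t) * 1) t :=
      (hg (a+t) (hmemp t ht)).comp t ((hasDerivAt_id t).const_add a)
    have h2 : HasDerivAt (fun t : ℝ => g (a-t)) (g' (a-t) * (-1)) t :=
      (hg (a-t) (hmemm t ht)).comp t ((hasDerivAt_id t).const_sub a)
    have h3 : HasDerivAt (fun t : ℝ => t^2 * B) ((2 * t^1) * B) t :=
      (hasDerivAt_pow 2 t).mul_const B
    have hq : HasDerivAt (fun t : ℝ => t^3) (3 * t^2) t := by
      simpa using hasDerivAt_pow 3 t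
    have h4 : HasDerivAt (fun t : ℝ => L * t^3) (L * (3 * t^2) ) t := hq.const_mul L
    have := ((((h1.sub_const (2 * g a)).add h2).sub h3).const_mul ε).sub h4
    refine this.congr_deriv ?_
    ring
  have hu' : ∀ t ∈ Icc (0:ℝ) 1, HasDerivAt u' (u'' t) t := by
    intro t ht
    have h1 : HasDerivAt (fun t : ℝ => g' (a+t)) (g'' (a+t) * 1) t :=
      (hg' (a+t) (hmemp t ht)).comp t ((hasDerivAt_id t).const_add a)
    have h2 : HasDerivAt (fun t : ℝ => g' (a-t)) (g'' (a-t) * (-1)) t :=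
      (hg' (a-t) (hmemm t ht)).comp t ((hasDerivAt_id t).const_sub a)
    have h3 : HasDerivAt (fun t : ℝ => 2*t*B) (2*B) t := by
      simpa using ((hasDerivAt_id t).const_mul (2:ℝ)).mul_const B
    have hp : HasDerivAt (fun t : ℝ => t^2) (2*t) t := by
      simpa using hasDerivAt_pow 2 t
    have h4 : HasDerivAt (fun t : ℝ => L * (3*t^2)) (L * (6*t)) t := by
      have := (hp.const_mul (3:ℝ)).const_mul L
      refine this.congr_deriv ?_
      ring
    have := (((h1.sub h2).sub h3).const_mul ε).sub h4
    refine this.congr_deriv ?_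
    ring
  have h2 : ∀ t ∈ Icc (0:ℝ) 1, u'' t ≤ 0 := by
    intro t ht
    have e1 : ε * (g'' (a+t) - B) ≤ L * t := by
      calc ε * (g'' (a+t) - B) ≤ |ε * (g'' (a+t) - B)| := le_abs_self _
        _ = |g'' (a+t) - B| := by rw [abs_mul, hε, one_mul]
        _ ≤ L * |a + t - a| := hlip _ (hmemp t ht)
        _ = L * t := by rw [show a + t - a = t by ring, abs_of_nonneg ht.1]
    have e2 : ε * (g'' (a-t) - B) ≤ L * t := by
      calc ε * (g'' (a-t) - B) ≤ |ε * (g'' (a-t) - B)| := le_abs_self _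
        _ = |g'' (a-t) - B| := by rw [abs_mul, hε, one_mul]
        _ ≤ L * |a - t - a| := hlip _ (hmemm t ht)
        _ = L * t := by rw [show a - t - a = -t by ring, abs_neg, abs_of_nonneg ht.1]
    have hLt : 0 ≤ L * t := mul_nonneg hL ht.1
    have : u'' t = ε * (g'' (a+t) - B) + ε * (g'' (a-t) - B) - L * (6*t) := by
      simp only [hu''_def]; ring
    rw [this]; nlinarith
  have h0 : u 0 = 0 := by
    show ε * (g (a+0) - 2 * g a + g (a-0) - 0^2 * B) - L * 0^3 = 0
    rw [add_zero, sub_zero]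
    ring
  have h0' : u' 0 = 0 := by
    show ε * (g' (a+0) - g' (a-0) - 2*0*B) - L * (3*0^2) = 0
    rw [add_zero, sub_zero]
    ring
  have := aux_nonpos u u' u'' hu hu' h0 h0' h2
  have hu1 : u 1 = ε * (g (a+1) - 2 * g a + g (a-1) - B) - L := by
    show ε * (g (a+1) - 2 * g a + g (a-1) - 1^2 * B) - L * 1^3 = _
    ring
  linarith [hu1 ▸ this]

lemma second_diff (g g' g'' : ℝ → ℝ) (a B L : ℝ) (hL : 0 ≤ L)
    (hg : ∀ x ∈ Icc (a-1) (a+1), HasDerivAt g (g' x) x)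
    (hg' : ∀ x ∈ Icc (a-1) (a+1), HasDerivAt g' (g'' x) x)
    (hlip : ∀ x ∈ Icc (a-1) (a+1), |g'' x - B| ≤ L * |x - a|) :
    |g (a+1) - 2 * g a + g (a-1) - B| ≤ L := by
  rw [abs_le]
  constructor
  · have := second_diff_side g g' g'' a B L (-1) hL (by norm_num) hg hg' hlip
    linarith
  · have := second_diff_side g g' g'' a B L 1 hL (by norm_num) hg hg' hlip
    linarith

theorem stmt14 (α : ℝ) (hα0 : 0 < α) (hα1 : α < 1) :
    ∃ C > 0, ∀ k : ℕ, 2 ≤ k →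
      |((k:ℝ) + 1) ^ (1 - α) - 2 * (k:ℝ) ^ (1 - α) + ((k:ℝ) - 1) ^ (1 - α)
          - α * (α - 1) / (k:ℝ) ^ (1 + α)| ≤ C / (k:ℝ) ^ (2 + α) := by
  set β := 1 - α with hβ
  refine ⟨16, by norm_num, fun k hk => ?_⟩
  set a : ℝ := (k:ℝ) with ha
  have ha2 : (2:ℝ) ≤ a := by rw [ha]; exact_mod_cast hk
  have ha1 : (1:ℝ) ≤ a - 1 := by linarith
  have hapos : (0:ℝ) < a := by linarith
  have hIccpos : ∀ x ∈ Icc (a-1) (a+1), (0:ℝ) < x := fun x hx => lt_of_lt_of_le (by linarith) hx.1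
  set g : ℝ → ℝ := fun x => x ^ β with hg_def
  set g' : ℝ → ℝ := fun x => β * x ^ (β - 1) with hg'_def
  set g'' : ℝ → ℝ := fun x => β * (β - 1) * x ^ (β - 2) with hg''_def
  set g''' : ℝ → ℝ := fun x => β * (β - 1) * ((β - 2) * x ^ (β - 3)) with hg'''_def
  set L : ℝ := 2 * (a - 1) ^ (β - 3) with hL_def
  have hg : ∀ x ∈ Icc (a-1) (a+1), HasDerivAt g (g' x) x := fun x hx =>
    Real.hasDerivAt_rpow_const (Or.inl (hIccpos x hx).ne')
  have hg' : ∀ x ∈ Icc (a-1) (a+1), HasDerivAt g' (g'' x) x := by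
    intro x hx
    have := (Real.hasDerivAt_rpow_const (p := β - 1) (Or.inl (hIccpos x hx).ne')).const_mul β
    refine this.congr_deriv ?_
    simp only [hg''_def]; ring_nf
  have hg'' : ∀ x ∈ Icc (a-1) (a+1), HasDerivAt g'' (g''' x) x := by
    intro x hx
    have := (Real.hasDerivAt_rpow_const (p := β - 2) (Or.inl (hIccpos x hx).ne')).const_mul
      (β * (β - 1))
    refine this.congr_deriv ?_
    simp only [hg'''_def]; ring_nf
  have habs : |β * (β - 1) * (β - 2)| ≤ 2 := by
    have h1 : β * (β - 1) * (β - 2) = (1 - α) * α * (1 + α) := by rw [hβ]; ring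
    have hp1 : (0:ℝ) < 1 - α := by linarith
    have hp2 : (0:ℝ) < 1 + α := by linarith
    have hnn : (0:ℝ) ≤ (1 - α) * α * (1 + α) :=
      le_of_lt (mul_pos (mul_pos hp1 hα0) hp2)
    rw [h1, abs_of_nonneg hnn]
    nlinarith [mul_pos hp1 hα0]
  -- bound on g''' on the interval
  have hbound : ∀ x ∈ Icc (a-1) (a+1), ‖g''' x‖ ≤ L := by
    intro x hx
    have hxpos := hIccpos x hx
    have hx1 : a - 1 ≤ x := hx.1
    have hrw : g''' x = β * (β - 1) * (β - 2) * x ^ (β - 3) := by simp only [hg'''_def]; ring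
    rw [Real.norm_eq_abs, hrw, abs_mul, abs_of_nonneg (Real.rpow_nonneg hxpos.le _)]
    have hxm : x ^ (β - 3) ≤ (a - 1) ^ (β - 3) :=
      Real.rpow_le_rpow_of_nonpos (by linarith) hx1 (by rw [hβ]; linarith)
    have h2 : |β * (β - 1) * (β - 2)| * x ^ (β - 3) ≤ 2 * (a - 1) ^ (β - 3) := by
      apply mul_le_mul habs hxm (Real.rpow_nonneg hxpos.le _)
      norm_num
    exact h2
  have hLnonneg : 0 ≤ L := by
    rw [hL_def]
    positivity
  have hB : g'' a = α * (α - 1) / a ^ (1 + α) := by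
    have h1 : β * (β - 1) = α * (α - 1) := by rw [hβ]; ring
    have h2 : β - 2 = -(1 + α) := by rw [hβ]; ring
    simp only [hg''_def, h1, h2, Real.rpow_neg hapos.le]
    rw [div_eq_mul_inv]
  have haIcc : a ∈ Icc (a-1) (a+1) := ⟨by linarith, by linarith⟩
  have hlip : ∀ x ∈ Icc (a-1) (a+1), |g'' x - g'' a| ≤ L * |x - a| := by
    intro x hx
    have := (convex_Icc (a-1) (a+1)).norm_image_sub_le_of_norm_hasDerivWithin_le
      (f := g'') (f' := g''')
      (fun y hy => (hg'' y hy).hasDerivWithinAt) hbound haIcc hx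
    simpa [Real.norm_eq_abs] using this
  have key := second_diff g g' g'' a (g'' a) L hLnonneg hg hg' hlip
  have hmain : |(a + 1) ^ β - 2 * a ^ β + (a - 1) ^ β - α * (α - 1) / a ^ (1 + α)| ≤ L := by
    rw [← hB]
    simpa [hg_def] using key
  -- now bound L ≤ 16 / a^(2+α)
  have hLle : L ≤ 16 / a ^ (2 + α) := by
    have h23 : β - 3 = -(2 + α) := by rw [hβ]; ring
    have ha1pos : (0:ℝ) < a - 1 := by linarith
    have hstep : a ^ (2 + α) / 8 ≤ (a - 1) ^ (2 + α) := by
      have h1 : a / 2 ≤ a - 1 := by linarith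
      have h2 : (a / 2) ^ (2 + α) ≤ (a - 1) ^ (2 + α) :=
        Real.rpow_le_rpow (by positivity) h1 (by linarith)
      have h3 : (a / 2) ^ (2 + α) = a ^ (2 + α) / 2 ^ (2 + α) :=
        Real.div_rpow hapos.le (by norm_num : (0:ℝ) ≤ 2) (2 + α)
      have h4 : (2:ℝ) ^ (2 + α) ≤ 8 := by
        calc (2:ℝ) ^ (2 + α) ≤ 2 ^ (3:ℝ) :=
              Real.rpow_le_rpow_of_exponent_le (by norm_num) (by linarith)
          _ = 8 := by
              rw [show (3:ℝ) = ((3:ℕ):ℝ) by norm_num, Real.rpow_natCast]; norm_num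
      have h5 : a ^ (2 + α) / 8 ≤ a ^ (2 + α) / 2 ^ (2 + α) := by
        apply div_le_div_of_nonneg_left (Real.rpow_nonneg hapos.le _) (by positivity) h4
      linarith [h3 ▸ h2]
    have hinv : (a - 1) ^ (β - 3) ≤ 8 / a ^ (2 + α) := by
      rw [h23, Real.rpow_neg ha1pos.le]
      rw [inv_le_iff_one_le_mul₀ (by positivity), div_mul_eq_mul_div, le_div_iff₀ (by positivity)]
      nlinarith [Real.rpow_pos_of_pos hapos (2 + α), Real.rpow_pos_of_pos ha1pos (2 + α)]
    rw [hL_def]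
    calc 2 * (a - 1) ^ (β - 3) ≤ 2 * (8 / a ^ (2 + α)) := by linarith
      _ = 16 / a ^ (2 + α) := by ring
  exact le_trans hmain hLle
end

section
/- Let 0 < α < 1, τ₀ > 0, and let y be twice continuously differentiable on [0, τ₀]. Then there is a constant C > 0 such that for every τ ∈ (0, τ₀], |D^α y(τ) − (y(τ) − y(0))/(Γ(2−α) τ^{α})| ≤ C τ^{2−α}. -/
open Set MeasureTheory intervalIntegral

theorem stmt18 (α τ₀ : ℝ) (hα0 : 0 < α) (hα1 : α < 1) (hτ₀ : 0 < τ₀)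
    (y : ℝ → ℝ) (hy : ContDiffOn ℝ 2 y (Set.Icc 0 τ₀)) :
    ∃ C > 0, ∀ τ : ℝ, τ ∈ Set.Ioc 0 τ₀ →
      |caputo α y τ - (y τ - y 0) / (Real.Gamma (2 - α) * τ ^ α)| ≤ C * τ ^ (2 - α) := by
  have h1α : (0:ℝ) < 1 - α := by linarith
  have hUD : UniqueDiffOn ℝ (Set.Icc (0:ℝ) τ₀) := uniqueDiffOn_Icc hτ₀
  set g := derivWithin y (Set.Icc (0:ℝ) τ₀) with hgdef
  have hg1 : ContDiffOn ℝ 1 g (Set.Icc (0:ℝ) τ₀) := hy.derivWithin hUD (by norm_num)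
  set h := derivWithin g (Set.Icc (0:ℝ) τ₀) with hhdef
  have hhc : ContinuousOn h (Set.Icc (0:ℝ) τ₀) := hg1.continuousOn_derivWithin hUD le_rfl
  obtain ⟨M, hM⟩ := isCompact_Icc.exists_bound_of_continuousOn hhc
  have hM0 : 0 ≤ M := le_trans (norm_nonneg _) (hM 0 ⟨le_rfl, hτ₀.le⟩)
  obtain ⟨K, hK⟩ := isCompact_Icc.exists_bound_of_continuousOn hg1.continuousOn
  have hK0 : 0 ≤ K := le_trans (norm_nonneg _) (hK 0 ⟨le_rfl, hτ₀.le⟩)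
  have hnhds : ∀ x ∈ Set.Ioo (0:ℝ) τ₀, Set.Icc (0:ℝ) τ₀ ∈ nhds x :=
    fun x hx => Icc_mem_nhds hx.1 hx.2
  have hgd : ∀ x ∈ Set.Ioo (0:ℝ) τ₀, deriv y x = g x :=
    fun x hx => (derivWithin_of_mem_nhds (hnhds x hx)).symm
  have hyd : ∀ x ∈ Set.Ioo (0:ℝ) τ₀, HasDerivAt y (deriv y x) x := by
    intro x hx
    exact (((hy.differentiableOn (by norm_num)) x (Set.Ioo_subset_Icc_self hx)).differentiableAt
      (hnhds x hx)).hasDerivAt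
  have hgd' : ∀ x ∈ Set.Ioo (0:ℝ) τ₀, HasDerivAt (deriv y) (h x) x := by
    intro x hx
    have hd := ((hg1.differentiableOn (by norm_num)) x (Set.Ioo_subset_Icc_self hx)).differentiableAt
      (hnhds x hx)
    have hdg : HasDerivAt g (h x) x := by
      rw [hhdef, derivWithin_of_mem_nhds (hnhds x hx)]
      exact hd.hasDerivAt
    have heq : (fun t => deriv y t) =ᶠ[nhds x] g := by
      filter_upwards [isOpen_Ioo.mem_nhds hx] with t ht using hgd t ht
    exact hdg.congr_of_eventuallyEq heq
  have hLip : ∀ a ∈ Set.Ioo (0:ℝ) τ₀, ∀ b ∈ Set.Ioo (0:ℝ) τ₀,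
      |deriv y b - deriv y a| ≤ M * |b - a| := by
    intro a ha b hb
    have := (convex_Ioo (0:ℝ) τ₀).norm_image_sub_le_of_norm_hasDerivWithin_le
      (f := deriv y) (f' := h)
      (fun x hx => (hgd' x hx).hasDerivWithinAt)
      (fun x hx => hM x (Set.Ioo_subset_Icc_self hx)) ha hb
    simpa [Real.norm_eq_abs] using this
  have hΓ1 : 0 < Real.Gamma (1 - α) := Real.Gamma_pos_of_pos h1α
  have hΓ2 : Real.Gamma (2 - α) = (1 - α) * Real.Gamma (1 - α) := by
    rw [show (2:ℝ) - α = (1 - α) + 1 by ring, Real.Gamma_add_one h1α.ne']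
  have hΓ2pos : 0 < Real.Gamma (2 - α) := by rw [hΓ2]; positivity
  refine ⟨(M + 1) / Real.Gamma (2 - α), by positivity, ?_⟩
  rintro τ ⟨hτ0, hττ₀⟩
  set w : ℝ → ℝ := fun t => (τ - t) ^ (-α) with hwdef
  have hwnn : ∀ t ∈ Set.Ioc (0:ℝ) τ, 0 ≤ w t := by
    intro t ht
    exact Real.rpow_nonneg (by linarith [ht.2]) _
  have hwτ : w τ = 0 := by
    simp only [hwdef, sub_self]
    exact Real.zero_rpow (by linarith)
  have hw_int : IntervalIntegrable w volume 0 τ := by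
    have := (intervalIntegrable_rpow' (a := 0) (b := τ)
      (by linarith : (-1:ℝ) < -α)).comp_sub_left τ
    simpa using this.symm
  have hIoosub : Set.Ioo (0:ℝ) τ ⊆ Set.Ioo 0 τ₀ := Set.Ioo_subset_Ioo le_rfl hττ₀
  -- integrability of the integrand
  have hwmeas : AEStronglyMeasurable w (volume.restrict (Set.uIoc (0:ℝ) τ)) := by
    rw [Set.uIoc_of_le hτ0.le, ← Measure.restrict_congr_set MeasureTheory.Ioo_ae_eq_Ioc]
    apply ContinuousOn.aestronglyMeasurable _ measurableSet_Ioo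
    intro t ht
    have hpos : (0:ℝ) < τ - t := by linarith [ht.2]
    have h1 : ContinuousAt (fun s : ℝ => s ^ (-α)) (τ - t) :=
      Real.continuousAt_rpow_const _ _ (Or.inl hpos.ne')
    exact (h1.comp ((continuous_const.sub continuous_id).continuousAt)).continuousWithinAt
  have hf_int : IntervalIntegrable (fun t => deriv y t * w t) volume 0 τ := by
    refine (hw_int.const_mul K).mono_fun
      (((measurable_deriv y).aestronglyMeasurable).mul hwmeas) ?_
    rw [Set.uIoc_of_le hτ0.le]
    refine (ae_restrict_mem measurableSet_Ioc).mono (fun t ht => ?_)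
    rcases eq_or_lt_of_le ht.2 with hteq | htlt
    · simp [hteq, hwτ]
    · have ht' : t ∈ Set.Ioo (0:ℝ) τ := ⟨ht.1, htlt⟩
      have : |deriv y t| ≤ K := by
        rw [hgd t (hIoosub ht')]
        simpa [Real.norm_eq_abs] using hK t (Set.Icc_subset_Icc le_rfl hττ₀
          (Set.Ioo_subset_Icc_self ht'))
      simp only [Real.norm_eq_abs, abs_mul]
      rw [abs_of_nonneg (hwnn t ht)]
      exact mul_le_mul_of_nonneg_right (this.trans (le_abs_self K)) (hwnn t ht)
  -- mean value theorem
  have hcont : ContinuousOn y (Set.Icc 0 τ) :=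
    hy.continuousOn.mono (Set.Icc_subset_Icc le_rfl hττ₀)
  obtain ⟨ξ, hξ, hξc⟩ := exists_hasDerivAt_eq_slope y (deriv y) hτ0 hcont
    (fun x hx => hyd x (hIoosub hx))
  set c := deriv y ξ with hcdef
  have hcval : c = (y τ - y 0) / τ := by rw [hξc, sub_zero]
  have hfc_int : IntervalIntegrable (fun t => (deriv y t - c) * w t) volume 0 τ := by
    have := hf_int.sub (hw_int.const_mul c)
    refine this.congr ?_
    intro t _; beta_reduce
    ring
  -- pointwise bound
  have hbound : ∀ t ∈ Set.Ioc (0:ℝ) τ, |(deriv y t - c) * w t| ≤ (M * τ) * w t := by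
    intro t ht
    rcases eq_or_lt_of_le ht.2 with hteq | htlt
    · simp [hteq, hwτ]
    · have ht' : t ∈ Set.Ioo (0:ℝ) τ := ⟨ht.1, htlt⟩
      have h1 : |deriv y t - c| ≤ M * τ := by
        calc |deriv y t - c| ≤ M * |t - ξ| := hLip ξ (hIoosub hξ) t (hIoosub ht')
          _ ≤ M * τ := by
              apply mul_le_mul_of_nonneg_left _ hM0
              rw [abs_sub_le_iff] -- maybe wrong; do abs_le
              constructor <;> [linarith [ht'.1, ht'.2, hξ.1, hξ.2]; linarith [ht'.1, ht'.2, hξ.1, hξ.2]]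
      rw [abs_mul, abs_of_nonneg (hwnn t ht)]
      exact mul_le_mul_of_nonneg_right h1 (hwnn t ht)
  -- integral of w
  have hw_val : ∫ t in (0:ℝ)..τ, w t = τ ^ (1 - α) / (1 - α) := by
    rw [hwdef]
    rw [intervalIntegral.integral_comp_sub_left (fun s => s ^ (-α)) τ]
    simp only [sub_self, sub_zero]
    rw [integral_rpow (Or.inl (by linarith : (-1:ℝ) < -α))]
    rw [Real.zero_rpow (by linarith : -α + 1 ≠ 0)]
    rw [show -α + 1 = 1 - α by ring]
    ring
  -- decomposition
  have hsplit : ∫ t in (0:ℝ)..τ, deriv y t * w t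
      = (∫ t in (0:ℝ)..τ, (deriv y t - c) * w t) + c * (τ ^ (1 - α) / (1 - α)) := by
    rw [← hw_val, ← intervalIntegral.integral_const_mul,
      ← intervalIntegral.integral_add hfc_int (hw_int.const_mul c)]
    apply intervalIntegral.integral_congr
    intro t _
    ring
  have hτα : (0:ℝ) < τ ^ α := Real.rpow_pos_of_pos hτ0 α
  have hτ1α : τ ^ (1 - α) * τ ^ α = τ := by
    rw [← Real.rpow_add hτ0]; simp
  have halg : (1 / Real.Gamma (1 - α)) * (c * (τ ^ (1 - α) / (1 - α)))
      = (y τ - y 0) / (Real.Gamma (2 - α) * τ ^ α) := by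
    rw [hΓ2, hcval]
    field_simp
    linear_combination (y τ - y 0) * hτ1α
  have key : caputo α y τ - (y τ - y 0) / (Real.Gamma (2 - α) * τ ^ α)
      = (1 / Real.Gamma (1 - α)) * ∫ t in (0:ℝ)..τ, (deriv y t - c) * w t := by
    show (1 / Real.Gamma (1 - α)) * (∫ t in (0:ℝ)..τ, deriv y t * (τ - t) ^ (-α)) - _ = _
    rw [show (∫ t in (0:ℝ)..τ, deriv y t * (τ - t) ^ (-α)) = ∫ t in (0:ℝ)..τ, deriv y t * w t
      from rfl, hsplit, mul_add, halg]
    ring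
  -- final estimate
  have hInt_bound : |∫ t in (0:ℝ)..τ, (deriv y t - c) * w t|
      ≤ (M * τ) * (τ ^ (1 - α) / (1 - α)) := by
    have hb : ∀ᵐ t ∂(volume.restrict (Set.uIoc (0:ℝ) τ)),
        ‖(deriv y t - c) * w t‖ ≤ (M * τ) * w t := by
      rw [Set.uIoc_of_le hτ0.le]
      exact (ae_restrict_mem measurableSet_Ioc).mono fun t ht => hbound t ht
    have := intervalIntegral.norm_integral_le_abs_of_norm_le hb (hw_int.const_mul (M * τ))
    rw [intervalIntegral.integral_const_mul, hw_val] at this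
    have hnn : 0 ≤ M * τ * (τ ^ (1 - α) / (1 - α)) := by positivity
    rwa [abs_of_nonneg hnn, Real.norm_eq_abs] at this
  rw [key, abs_mul, abs_of_pos (by positivity : (0:ℝ) < 1 / Real.Gamma (1 - α))]
  have hτ2 : τ * τ ^ (1 - α) = τ ^ (2 - α) := by
    rw [show (2:ℝ) - α = 1 + (1 - α) by ring, Real.rpow_add hτ0, Real.rpow_one]
  calc (1 / Real.Gamma (1 - α)) * |∫ t in (0:ℝ)..τ, (deriv y t - c) * w t|
      ≤ (1 / Real.Gamma (1 - α)) * ((M * τ) * (τ ^ (1 - α) / (1 - α))) := by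
        exact mul_le_mul_of_nonneg_left hInt_bound (by positivity)
    _ = (M / Real.Gamma (2 - α)) * τ ^ (2 - α) := by
        rw [hΓ2, ← hτ2]; field_simp
    _ ≤ ((M + 1) / Real.Gamma (2 - α)) * τ ^ (2 - α) := by
        have : (0:ℝ) ≤ τ ^ (2 - α) := Real.rpow_nonneg hτ0.le _
        gcongr
        linarith
end
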